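/- Let x1, x2, x3 be three distinct vertices of a graph G, and let H be a connected induced subgraph of G \ {x1, x2, x3} containing at least one neighbor of each of x1, x2, x3, with V(H) minimal under inclusion subject to these conditions. Then one of the following holds: (i) for some permutation {i, j, k} of {1, 2, 3}, there is a path P from x_i to x_j (or a hole containing the edge x_i x_j) with H = P \ {x_i, x_j}, and x_k either has two non-adjacent neighbors in H or exactly two neighbors in H which are adjacent; (ii) there is a vertex a in H and three paths P1, P2, P3 from a to x1, x2, x3 respectively, with H = (P1 ∪ P2 ∪ P3) \ {x1, x2, x3}, the sets P_i \ {a} pairwise disjoint, and no edges between P_i \ {a} and P_j \ {a} except possibly x_i x_j; (iii) there is a triangle a1 a2 a3 in H and three pairwise disjoint paths P_i from a_i to x_i with H = (P1 ∪ P2 ∪ P3) \ {x1, x2, x3}, and no edges between distinct P_i and P_j except a_i a_j and possibly x_i x_j. -/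

import Mathlib

open SimpleGraph Set

namespace Paper

variable {V : Type} {W : Type}

/-- X and Y are anticomplete: no edge between them. -/
def Anticomplete (G : SimpleGraph V) (X Y : Set V) : Prop :=
  ∀ x ∈ X, ∀ y ∈ Y, ¬ G.Adj x y

/-- Closed neighborhood N[v]. -/
def closedNbr (G : SimpleGraph V) (v : V) : Set V := insert v (G.neighborSet v)

/-- Open neighborhood N(X) of a set of vertices. -/
def setNbr (G : SimpleGraph V) (X : Set V) : Set V :=
  {v | v ∉ X ∧ ∃ x ∈ X, G.Adj x v}

/-- Closed neighborhood N[X] of a set of vertices. -/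
def closedNbrSet (G : SimpleGraph V) (X : Set V) : Set V := X ∪ setNbr G X

/-- D is a connected component of the subgraph of G induced on S. -/
def IsComponentOf (G : SimpleGraph V) (S D : Set V) : Prop :=
  D.Nonempty ∧ D ⊆ S ∧ (G.induce D).Connected ∧
    ∀ D' : Set V, D ⊆ D' → D' ⊆ S → (G.induce D').Connected → D' = D

/-- G contains no induced copy of H. -/
def HFree (G : SimpleGraph V) (H : SimpleGraph W) : Prop :=
  ∀ s : Set V, ¬ Nonempty ((G.induce s) ≃g H)

/-- The diamond: K₄ minus the edge 01. -/
def diamond : SimpleGraph (Fin 4) :=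
  SimpleGraph.fromRel (fun x y => s(x, y) ≠ s(0, 1))

/-- H is a hole of G: an induced cycle of length at least 4. -/
def IsHole (G : SimpleGraph V) (H : Set V) : Prop :=
  ∃ n, 4 ≤ n ∧ Nonempty ((G.induce H) ≃g cycleGraph n)

/-- H is an even hole of G. -/
def IsEvenHole (G : SimpleGraph V) (H : Set V) : Prop :=
  ∃ n, 4 ≤ n ∧ Even n ∧ Nonempty ((G.induce H) ≃g cycleGraph n)

/-- (H, w) is a wheel: a hole plus a vertex with ≥ 3 pairwise non-adjacent neighbors in H. -/
def IsWheel (G : SimpleGraph V) (H : Set V) (w : V) : Prop :=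
  IsHole G H ∧ ∃ x y z, x ∈ H ∩ G.neighborSet w ∧ y ∈ H ∩ G.neighborSet w ∧
    z ∈ H ∩ G.neighborSet w ∧ x ≠ y ∧ x ≠ z ∧ y ≠ z ∧
    ¬ G.Adj x y ∧ ¬ G.Adj x z ∧ ¬ G.Adj y z

/-- (H, v) is a line wheel: N(v) ∩ H is a union of two disjoint edges. -/
def IsLineWheel (G : SimpleGraph V) (H : Set V) (v : V) : Prop :=
  IsHole G H ∧ v ∉ H ∧ ∃ a b c d : V,
    a ≠ b ∧ a ≠ c ∧ a ≠ d ∧ b ≠ c ∧ b ≠ d ∧ c ≠ d ∧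
    G.neighborSet v ∩ H = {a, b, c, d} ∧
    G.Adj a b ∧ G.Adj c d ∧ ¬ G.Adj a c ∧ ¬ G.Adj a d ∧ ¬ G.Adj b c ∧ ¬ G.Adj b d

/-- An even wheel: a line wheel, or a wheel with an even number of neighbors in the hole,
not forming a path of length one. -/
def IsEvenWheel (G : SimpleGraph V) (H : Set V) (v : V) : Prop :=
  IsLineWheel G H v ∨
    (IsWheel G H v ∧ Even ((G.neighborSet v ∩ H).ncard) ∧
      ¬ ∃ a b, a ≠ b ∧ G.Adj a b ∧ G.neighborSet v ∩ H = {a, b})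

/-- The set of vertices of a walk. -/
def suppSet (G : SimpleGraph V) {a b : V} (p : G.Walk a b) : Set V :=
  {v | v ∈ p.support}

/-- A walk is induced: the only adjacencies among its vertices are its own edges. -/
def InducedWalk (G : SimpleGraph V) {a b : V} (p : G.Walk a b) : Prop :=
  ∀ u v, u ∈ p.support → v ∈ p.support → G.Adj u v → s(u, v) ∈ p.edges

/-- The interior of a walk: its vertices except the two endpoints. -/
def wInterior (G : SimpleGraph V) {a b : V} (p : G.Walk a b) : Set V :=
  {v | v ∈ p.support ∧ v ≠ a ∧ v ≠ b}

/-- G contains a theta as an induced subgraph. -/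
def ContainsTheta (G : SimpleGraph V) : Prop :=
  ∃ (a b : V) (p₁ p₂ p₃ : G.Walk a b),
    ¬ G.Adj a b ∧
    p₁.IsPath ∧ p₂.IsPath ∧ p₃.IsPath ∧
    InducedWalk G p₁ ∧ InducedWalk G p₂ ∧ InducedWalk G p₃ ∧
    2 ≤ p₁.length ∧ 2 ≤ p₂.length ∧ 2 ≤ p₃.length ∧
    Disjoint (wInterior G p₁) (wInterior G p₂) ∧
    Disjoint (wInterior G p₁) (wInterior G p₃) ∧
    Disjoint (wInterior G p₂) (wInterior G p₃) ∧
    Anticomplete G (wInterior G p₁) (wInterior G p₂) ∧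
    Anticomplete G (wInterior G p₁) (wInterior G p₃) ∧
    Anticomplete G (wInterior G p₂) (wInterior G p₃)

/-- G contains a pyramid as an induced subgraph. -/
def ContainsPyramid (G : SimpleGraph V) : Prop :=
  ∃ (a b₁ b₂ b₃ : V) (p₁ : G.Walk a b₁) (p₂ : G.Walk a b₂) (p₃ : G.Walk a b₃),
    G.Adj b₁ b₂ ∧ G.Adj b₁ b₃ ∧ G.Adj b₂ b₃ ∧
    p₁.IsPath ∧ p₂.IsPath ∧ p₃.IsPath ∧
    InducedWalk G p₁ ∧ InducedWalk G p₂ ∧ InducedWalk G p₃ ∧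
    1 ≤ p₁.length ∧ 1 ≤ p₂.length ∧ 1 ≤ p₃.length ∧
    ((2 ≤ p₁.length ∧ 2 ≤ p₂.length) ∨ (2 ≤ p₁.length ∧ 2 ≤ p₃.length) ∨
      (2 ≤ p₂.length ∧ 2 ≤ p₃.length)) ∧
    Disjoint (suppSet G p₁ \ {a}) (suppSet G p₂ \ {a}) ∧
    Disjoint (suppSet G p₁ \ {a}) (suppSet G p₃ \ {a}) ∧
    Disjoint (suppSet G p₂ \ {a}) (suppSet G p₃ \ {a}) ∧
    (∀ u v, u ∈ suppSet G p₁ \ {a} → v ∈ suppSet G p₂ \ {a} → G.Adj u v →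
      u = b₁ ∧ v = b₂) ∧
    (∀ u v, u ∈ suppSet G p₁ \ {a} → v ∈ suppSet G p₃ \ {a} → G.Adj u v →
      u = b₁ ∧ v = b₃) ∧
    (∀ u v, u ∈ suppSet G p₂ \ {a} → v ∈ suppSet G p₃ \ {a} → G.Adj u v →
      u = b₂ ∧ v = b₃)

/-- G contains a prism as an induced subgraph. -/
def ContainsPrism (G : SimpleGraph V) : Prop :=
  ∃ (a₁ a₂ a₃ b₁ b₂ b₃ : V) (p₁ : G.Walk a₁ b₁) (p₂ : G.Walk a₂ b₂) (p₃ : G.Walk a₃ b₃),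
    G.Adj a₁ a₂ ∧ G.Adj a₁ a₃ ∧ G.Adj a₂ a₃ ∧
    G.Adj b₁ b₂ ∧ G.Adj b₁ b₃ ∧ G.Adj b₂ b₃ ∧
    p₁.IsPath ∧ p₂.IsPath ∧ p₃.IsPath ∧
    InducedWalk G p₁ ∧ InducedWalk G p₂ ∧ InducedWalk G p₃ ∧
    Disjoint (suppSet G p₁) (suppSet G p₂) ∧
    Disjoint (suppSet G p₁) (suppSet G p₃) ∧
    Disjoint (suppSet G p₂) (suppSet G p₃) ∧
    (∀ u v, u ∈ suppSet G p₁ → v ∈ suppSet G p₂ → G.Adj u v →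
      s(u, v) = s(a₁, a₂) ∨ s(u, v) = s(b₁, b₂)) ∧
    (∀ u v, u ∈ suppSet G p₁ → v ∈ suppSet G p₃ → G.Adj u v →
      s(u, v) = s(a₁, a₃) ∨ s(u, v) = s(b₁, b₃)) ∧
    (∀ u v, u ∈ suppSet G p₂ → v ∈ suppSet G p₃ → G.Adj u v →
      s(u, v) = s(a₂, a₃) ∨ s(u, v) = s(b₂, b₃))

/-- G has a clique cutset. -/
def HasCliqueCutset (G : SimpleGraph V) : Prop :=
  ∃ C : Set V, G.IsClique C ∧ ¬ (G.induce Cᶜ).Preconnected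

/-- (A, C, B) is a separation of G. -/
def IsSeparation (G : SimpleGraph V) (A C B : Set V) : Prop :=
  A ∪ C ∪ B = Set.univ ∧ Disjoint A C ∧ Disjoint A B ∧ Disjoint C B ∧
    Anticomplete G A B

/-- The weight of a set of vertices. -/
noncomputable def fweight (w : V → ℝ) (X : Set V) : ℝ := ∑ᶠ x ∈ X, w x

/-- X is a (w, c)-balanced separator of G. -/
def IsBalSep (G : SimpleGraph V) (w : V → ℝ) (c : ℝ) (X : Set V) : Prop :=
  ∀ D, IsComponentOf G Xᶜ D → fweight w D ≤ c

/-- The treewidth of G is at most k. -/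
def TreewidthLE (G : SimpleGraph V) (k : ℕ) : Prop :=
  ∃ (T : Type) (tG : SimpleGraph T) (χ : T → Set V),
    tG.IsTree ∧
    (∀ v, ∃ t, v ∈ χ t) ∧
    (∀ u v, G.Adj u v → ∃ t, u ∈ χ t ∧ v ∈ χ t) ∧
    (∀ v, (tG.induce {t | v ∈ χ t}).Connected) ∧
    ∀ t, (χ t).ncard ≤ k + 1

/-- The Ramsey number R(t, s). -/
noncomputable def ramsey (t s : ℕ) : ℕ :=
  sInf {n | ∀ G : SimpleGraph (Fin n), ¬ G.CliqueFree t ∨ ¬ Gᶜ.CliqueFree s}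

/-- (H, v) is a twin wheel: N(v) ∩ H is a path of length two. -/
def IsTwinWheel (G : SimpleGraph V) (H : Set V) (v : V) : Prop :=
  IsHole G H ∧ ∃ a b c : V, a ≠ b ∧ a ≠ c ∧ b ≠ c ∧
    G.neighborSet v ∩ H = {a, b, c} ∧ G.Adj a b ∧ G.Adj b c ∧ ¬ G.Adj a c

/-- (H, v) is a short pyramid: v has exactly three neighbors in H, exactly two adjacent. -/
def IsShortPyramid (G : SimpleGraph V) (H : Set V) (v : V) : Prop :=
  IsHole G H ∧ ∃ a b c : V, a ≠ b ∧ a ≠ c ∧ b ≠ c ∧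
    G.neighborSet v ∩ H = {a, b, c} ∧ G.Adj a b ∧ ¬ G.Adj a c ∧ ¬ G.Adj b c

/-- A proper wheel: a wheel that is neither a twin wheel nor a short pyramid. -/
def IsProperWheel (G : SimpleGraph V) (H : Set V) (v : V) : Prop :=
  IsWheel G H v ∧ ¬ IsTwinWheel G H v ∧ ¬ IsShortPyramid G H v

/-- A universal wheel: v is complete to H. -/
def IsUniversalWheel (G : SimpleGraph V) (H : Set V) (v : V) : Prop :=
  IsWheel G H v ∧ H ⊆ G.neighborSet v


section Infra12
variable {G : SimpleGraph V}


variable {V : Type} {G : SimpleGraph V}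

lemma length_eq_one_edge {u v : V} (q : G.Walk u v) (h : q.length = 1) : s(u,v) ∈ q.edges := by
  cases q with
  | nil => simp at h
  | cons h' q' =>
    simp only [SimpleGraph.Walk.length_cons, add_left_inj] at h
    have h0 : q'.length = 0 := by omega
    have := SimpleGraph.Walk.eq_of_length_eq_zero h0
    subst this
    simp

section DE
variable [DecidableEq V]

lemma dropUntil_cons {a c b u : V} (r : G.Adj a c) (q : G.Walk c b) (hne : a ≠ u)
    (h : u ∈ (SimpleGraph.Walk.cons r q).support) (h' : u ∈ q.support) :
    (SimpleGraph.Walk.cons r q).dropUntil u h = q.dropUntil u h' := by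
  simp [SimpleGraph.Walk.dropUntil, dif_neg hne]

lemma takeUntil_cons {a c b u : V} (r : G.Adj a c) (q : G.Walk c b) (hne : a ≠ u)
    (h : u ∈ (SimpleGraph.Walk.cons r q).support) (h' : u ∈ q.support) :
    (SimpleGraph.Walk.cons r q).takeUntil u h =
      SimpleGraph.Walk.cons r (q.takeUntil u h') := by
  simp [SimpleGraph.Walk.takeUntil, dif_neg hne]

lemma mem_dropUntil_or {a b : V} (p : G.Walk a b) {u v : V}
    (hu : u ∈ p.support) (hv : v ∈ p.support) :
    v ∈ (p.dropUntil u hu).support ∨ u ∈ (p.dropUntil v hv).support := by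
  induction p with
  | nil =>
    rw [SimpleGraph.Walk.mem_support_nil_iff] at hu hv
    subst hu; subst hv
    left; exact SimpleGraph.Walk.start_mem_support _
  | @cons a c b r q ih =>
    by_cases hau : a = u
    · subst hau
      left
      simp only [SimpleGraph.Walk.dropUntil, dif_pos rfl]
      simpa using hv
    · by_cases hav : a = v
      · subst hav
        right
        simp [SimpleGraph.Walk.dropUntil]
        simpa using hu
      · have hu' : u ∈ q.support := by
          rcases SimpleGraph.Walk.mem_support_iff _ |>.mp hu with h | h
          · exact absurd h.symm hau
          · exact h
        have hv' : v ∈ q.support := by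
          rcases SimpleGraph.Walk.mem_support_iff _ |>.mp hv with h | h
          · exact absurd h.symm hav
          · exact h
        rw [dropUntil_cons r q hau hu hu', dropUntil_cons r q hav hv hv']
        exact ih hu' hv'

lemma junction {a b u : V} {p : G.Walk a b} (hp : p.IsPath) (hu : u ∈ p.support) :
    ∀ v, v ∈ (p.takeUntil u hu).support → v ∈ (p.dropUntil u hu).support → v = u := by
  intro v hvt hvd
  have hsplit := SimpleGraph.Walk.take_spec p hu
  have hnodup : p.support.Nodup := hp.support_nodup
  rw [← hsplit, SimpleGraph.Walk.support_append] at hnodup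
  by_contra hne
  have hvtail : v ∈ (p.dropUntil u hu).support.tail := by
    have := SimpleGraph.Walk.support_eq_cons (p.dropUntil u hu)
    rw [this, List.mem_cons] at hvd
    rcases hvd with h | h
    · exact absurd h hne
    · exact h
  exact (List.disjoint_of_nodup_append hnodup) hvt hvtail

lemma firstHit {a b : V} (p : G.Walk a b) (X : Set V) {x : V}
    (hx : x ∈ p.support) (hxX : x ∈ X) :
    ∃ f, ∃ hf : f ∈ p.support, f ∈ X ∧
      ∀ v ∈ (p.takeUntil f hf).support, v ∈ X → v = f := by
  induction p with
  | nil =>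
    rw [SimpleGraph.Walk.mem_support_nil_iff] at hx
    subst hx
    refine ⟨x, SimpleGraph.Walk.start_mem_support _, hxX, ?_⟩
    intro v hv _
    have := SimpleGraph.Walk.support_takeUntil_subset _ (SimpleGraph.Walk.start_mem_support (SimpleGraph.Walk.nil : G.Walk x x)) hv
    rwa [SimpleGraph.Walk.mem_support_nil_iff] at this
  | @cons a c b r q ih =>
    by_cases haX : a ∈ X
    · refine ⟨a, SimpleGraph.Walk.start_mem_support _, haX, ?_⟩
      intro v hv _
      have : (SimpleGraph.Walk.cons r q).takeUntil a (SimpleGraph.Walk.start_mem_support _) = SimpleGraph.Walk.nil := by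
        simp [SimpleGraph.Walk.takeUntil]
      rw [this] at hv
      rwa [SimpleGraph.Walk.mem_support_nil_iff] at hv
    · have hxa : x ≠ a := fun h => haX (h ▸ hxX)
      have hx' : x ∈ q.support := by
        rcases SimpleGraph.Walk.mem_support_iff _ |>.mp hx with h | h
        · exact absurd h hxa
        · exact h
      obtain ⟨f, hf, hfX, hfirst⟩ := ih hx'
      have hfa : a ≠ f := fun h => haX (h ▸ hfX)
      refine ⟨f, by rw [SimpleGraph.Walk.support_cons]; exact List.mem_cons_of_mem _ hf, hfX, ?_⟩
      intro v hv hvX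
      rw [takeUntil_cons r q hfa _ hf] at hv
      rcases SimpleGraph.Walk.mem_support_iff _ |>.mp hv with h | h
      · exact absurd (h ▸ hvX) haX
      · exact hfirst v h hvX

end DE


variable {V : Type} {G : SimpleGraph V}

lemma reachable_induce_of_walk {s : Set V} {a b : V} (p : G.Walk a b)
    (hsub : ∀ v ∈ p.support, v ∈ s) (ha : a ∈ s) (hb : b ∈ s) :
    (G.induce s).Reachable ⟨a, ha⟩ ⟨b, hb⟩ := by
  induction p with
  | nil => rfl
  | @cons a c b r q ih =>
    have hc : c ∈ s := hsub c (by simp)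
    have h1 : (G.induce s).Adj ⟨a, ha⟩ ⟨c, hc⟩ := r
    exact h1.reachable.trans (ih (fun v hv => hsub v (by simp [hv])) hc hb)

lemma induce_connected_of_walk [DecidableEq V] {a b : V} (w : G.Walk a b) :
    (G.induce {v | v ∈ w.support}).Connected := by
  rw [SimpleGraph.connected_iff]
  constructor
  · rintro ⟨u, hu⟩ ⟨v, hv⟩
    have hu' : u ∈ w.support := hu
    have hv' : v ∈ w.support := hv
    let q : G.Walk u v := (w.takeUntil u hu').reverse.append (w.takeUntil v hv')
    have hsub : ∀ z ∈ q.support, z ∈ {x | x ∈ w.support} := by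
      intro z hz
      simp only [SimpleGraph.Walk.support_append, List.mem_append,
        SimpleGraph.Walk.support_reverse, List.mem_reverse, q] at hz
      rcases hz with h | h
      · exact SimpleGraph.Walk.support_takeUntil_subset _ _ h
      · exact SimpleGraph.Walk.support_takeUntil_subset _ _ (List.mem_of_mem_tail h)
    exact reachable_induce_of_walk q hsub hu hv
  · exact ⟨⟨a, SimpleGraph.Walk.start_mem_support w⟩⟩

lemma walk_of_induce_reachable {s : Set V} {a b : V} (ha : a ∈ s) (hb : b ∈ s)
    (h : (G.induce s).Reachable ⟨a, ha⟩ ⟨b, hb⟩) :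
    ∃ p : G.Walk a b, ∀ v ∈ p.support, v ∈ s := by
  obtain ⟨q⟩ := h
  refine ⟨q.map (SimpleGraph.Embedding.induce s).toHom, ?_⟩
  intro v hv
  erw [SimpleGraph.Walk.support_map, List.mem_map] at hv
  obtain ⟨⟨z, hz⟩, _, rfl⟩ := hv
  exact hz

lemma isPath_append {a b c : V} {p : G.Walk a b} {q : G.Walk b c}
    (hp : p.IsPath) (hq : q.IsPath)
    (hdisj : ∀ v ∈ p.support, v ∈ q.support → v = b) :
    (p.append q).IsPath := by
  rw [SimpleGraph.Walk.isPath_def, SimpleGraph.Walk.support_append, List.nodup_append]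
  refine ⟨hp.support_nodup, ?_, ?_⟩
  · have := hq.support_nodup
    rw [SimpleGraph.Walk.support_eq_cons q] at this
    exact this.of_cons
  · intro v hvp v' hvq hvv
    rw [← hvv] at hvq
    have hb : v ∈ q.support := by
      rw [SimpleGraph.Walk.support_eq_cons q]
      exact List.mem_cons_of_mem _ hvq
    have := hdisj v hvp hb
    subst this
    have := hq.support_nodup
    rw [SimpleGraph.Walk.support_eq_cons q, List.nodup_cons] at this
    exact this.1 hvq

lemma edge_endpoint_unique {a b z c : V} {r : G.Adj a c} {q : G.Walk c b}
    (hp : (SimpleGraph.Walk.cons r q).IsPath)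
    (hz : s(a, z) ∈ (SimpleGraph.Walk.cons r q).edges) : z = c := by
  rw [SimpleGraph.Walk.edges_cons, List.mem_cons] at hz
  rcases hz with h | h
  · rw [Sym2.eq_iff] at h
    rcases h with ⟨-, h2⟩ | ⟨h1, h2⟩
    · exact h2
    · exact absurd h1 r.ne
  · exact absurd (SimpleGraph.Walk.fst_mem_support_of_mem_edges q h)
      (by have := hp.support_nodup; rw [SimpleGraph.Walk.support_cons, List.nodup_cons] at this; exact this.1)

lemma no_triangle {u v a b c : V} {p : G.Walk u v} (hp : p.IsPath)
    (hab : s(a,b) ∈ p.edges) (hac : s(a,c) ∈ p.edges) (hbc : s(b,c) ∈ p.edges)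
    (hab' : a ≠ b) (hac' : a ≠ c) (hbc' : b ≠ c) : False := by
  induction p with
  | nil => simp at hab
  | @cons u w v r q ih =>
    have hnot : u ∉ q.support := by
      have := hp.support_nodup
      rw [SimpleGraph.Walk.support_cons, List.nodup_cons] at this
      exact this.1
    have key : ∀ x y : V, s(x,y) ∈ (SimpleGraph.Walk.cons r q).edges → x ≠ u → y ≠ u →
        s(x,y) ∈ q.edges := by
      intro x y hxy hxu hyu
      rw [SimpleGraph.Walk.edges_cons, List.mem_cons] at hxy
      rcases hxy with h | h
      · rw [Sym2.eq_iff] at h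
        rcases h with ⟨h1, -⟩ | ⟨-, h2⟩
        · exact absurd h1 hxu
        · exact absurd h2 hyu
      · exact h
    by_cases hau : a = u
    · subst hau
      have h1 := edge_endpoint_unique hp hab
      have h2 := edge_endpoint_unique hp hac
      exact hbc' (h1.trans h2.symm)
    · by_cases hbu : b = u
      · subst hbu
        have h1 := edge_endpoint_unique hp (Sym2.eq_swap ▸ hab)
        have h2 := edge_endpoint_unique hp hbc
        exact hac' (h1.trans h2.symm)
      · by_cases hcu : c = u
        · subst hcu
          have h1 := edge_endpoint_unique hp (Sym2.eq_swap ▸ hac)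
          have h2 := edge_endpoint_unique hp (Sym2.eq_swap ▸ hbc)
          exact hab' (h1.trans h2.symm)
        · exact ih hp.of_cons (key a b hab hau hbu) (key a c hac hau hcu)
            (key b c hbc hbu hcu)


variable {V : Type} {G : SimpleGraph V}

/-- Minimum-length path between two vertex sets inside a connected induced subgraph. -/
lemma exists_min_path [DecidableEq V] (H A B : Set V)
    (hconn : (G.induce H).Connected)
    (hA : (A ∩ H).Nonempty) (hB : (B ∩ H).Nonempty) :
    ∃ (a b : V) (p : G.Walk a b), a ∈ A ∧ a ∈ H ∧ b ∈ B ∧ b ∈ H ∧ p.IsPath ∧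
      (∀ v ∈ p.support, v ∈ H) ∧
      (∀ (a' b' : V) (q : G.Walk a' b'), a' ∈ A → a' ∈ H → b' ∈ B → b' ∈ H →
        (∀ v ∈ q.support, v ∈ H) → p.length ≤ q.length) := by
  obtain ⟨a0, ha0A, ha0H⟩ := hA
  obtain ⟨b0, hb0B, hb0H⟩ := hB
  have hreach := hconn.preconnected ⟨a0, ha0H⟩ ⟨b0, hb0H⟩
  obtain ⟨p0, hp0⟩ := walk_of_induce_reachable ha0H hb0H hreach
  set L : Set ℕ := {n | ∃ (a b : V) (p : G.Walk a b), a ∈ A ∧ a ∈ H ∧ b ∈ B ∧ b ∈ H ∧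
    (∀ v ∈ p.support, v ∈ H) ∧ p.length = n} with hL
  have hLne : L.Nonempty := ⟨p0.length, a0, b0, p0, ha0A, ha0H, hb0B, hb0H, hp0, rfl⟩
  have hmem := Nat.sInf_mem hLne
  obtain ⟨a, b, p, haA, haH, hbB, hbH, hpH, hplen⟩ := hmem
  have hmin : ∀ (a' b' : V) (q : G.Walk a' b'), a' ∈ A → a' ∈ H → b' ∈ B → b' ∈ H →
      (∀ v ∈ q.support, v ∈ H) → p.length ≤ q.length := by
    intro a' b' q h1 h2 h3 h4 h5
    rw [hplen]
    exact Nat.sInf_le ⟨a', b', q, h1, h2, h3, h4, h5, rfl⟩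
  refine ⟨a, b, p.bypass, haA, haH, hbB, hbH, SimpleGraph.Walk.bypass_isPath p, ?_, ?_⟩
  · intro v hv
    exact hpH v (SimpleGraph.Walk.support_bypass_subset p hv)
  · intro a' b' q h1 h2 h3 h4 h5
    calc p.bypass.length ≤ p.length := SimpleGraph.Walk.length_bypass_le p
    _ ≤ q.length := hmin a' b' q h1 h2 h3 h4 h5

/-- A minimum-length path is an induced walk. -/
lemma min_path_induced [DecidableEq V] {H A B : Set V} {a b : V} {p : G.Walk a b}
    (haA : a ∈ A) (haH : a ∈ H) (hbB : b ∈ B) (hbH : b ∈ H)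
    (hpH : ∀ v ∈ p.support, v ∈ H)
    (hmin : ∀ (a' b' : V) (q : G.Walk a' b'), a' ∈ A → a' ∈ H → b' ∈ B → b' ∈ H →
      (∀ v ∈ q.support, v ∈ H) → p.length ≤ q.length) :
    ∀ u v, u ∈ p.support → v ∈ p.support → G.Adj u v → s(u, v) ∈ p.edges := by
  have aux : ∀ u v (hu : u ∈ p.support), G.Adj u v →
      v ∈ (p.dropUntil u hu).support → s(u, v) ∈ p.edges := by
    intro u v hu hadj hv
    set D := p.dropUntil u hu with hD
    have hvD : v ∈ D.support := hv
    -- competitor : takeUntil u ++ edge uv ++ (D.dropUntil v)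
    let q : G.Walk a b := (p.takeUntil u hu).append
      (SimpleGraph.Walk.cons hadj (D.dropUntil v hvD))
    have hqH : ∀ z ∈ q.support, z ∈ H := by
      intro z hz
      simp only [SimpleGraph.Walk.support_append, List.mem_append, q] at hz
      rcases hz with h | h
      · exact hpH z (SimpleGraph.Walk.support_takeUntil_subset _ _ h)
      · have h' := List.mem_of_mem_tail h
        rw [SimpleGraph.Walk.support_cons, List.mem_cons] at h'
        rcases h' with h' | h'
        · subst h'
          exact hpH _ hu
        · exact hpH z (SimpleGraph.Walk.support_dropUntil_subset _ hu
            (SimpleGraph.Walk.support_dropUntil_subset _ hvD h'))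
    have hlenq := hmin a b q haA haH hbB hbH hqH
    have hsplit1 : (p.takeUntil u hu).length + D.length = p.length := by
      rw [← SimpleGraph.Walk.length_append, SimpleGraph.Walk.take_spec]
    have hsplit2 : (D.takeUntil v hvD).length + (D.dropUntil v hvD).length = D.length := by
      rw [← SimpleGraph.Walk.length_append, SimpleGraph.Walk.take_spec]
    have hlq : q.length = (p.takeUntil u hu).length + 1 + (D.dropUntil v hvD).length := by
      simp [q, SimpleGraph.Walk.length_append, SimpleGraph.Walk.length_cons]
      omega
    have hle : (D.takeUntil v hvD).length ≤ 1 := by omega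
    have hne : (D.takeUntil v hvD).length ≠ 0 := by
      intro h0
      exact hadj.ne (SimpleGraph.Walk.eq_of_length_eq_zero h0)
    have h1 : (D.takeUntil v hvD).length = 1 := by omega
    have := length_eq_one_edge _ h1
    exact SimpleGraph.Walk.edges_dropUntil_subset p hu
      (SimpleGraph.Walk.edges_takeUntil_subset D hvD this)
  intro u v hu hv hadj
  rcases mem_dropUntil_or p hu hv with h | h
  · exact aux u v hu hadj h
  · have := aux v u hv hadj.symm h
    rwa [Sym2.eq_swap] at this

/-- Only the first vertex of a min path lies in A. -/
lemma min_path_unique_start [DecidableEq V] {H A B : Set V} {a b : V} {p : G.Walk a b}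
    (haA : a ∈ A) (haH : a ∈ H) (hbB : b ∈ B) (hbH : b ∈ H)
    (hpH : ∀ v ∈ p.support, v ∈ H)
    (hmin : ∀ (a' b' : V) (q : G.Walk a' b'), a' ∈ A → a' ∈ H → b' ∈ B → b' ∈ H →
      (∀ v ∈ q.support, v ∈ H) → p.length ≤ q.length) :
    ∀ v ∈ p.support, v ∈ A → v = a := by
  intro v hv hvA
  have hq : ∀ z ∈ (p.dropUntil v hv).support, z ∈ H := fun z hz =>
    hpH z (SimpleGraph.Walk.support_dropUntil_subset _ _ hz)
  have := hmin v b (p.dropUntil v hv) hvA (hpH v hv) hbB hbH hq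
  have hsplit : (p.takeUntil v hv).length + (p.dropUntil v hv).length = p.length := by
    rw [← SimpleGraph.Walk.length_append, SimpleGraph.Walk.take_spec]
  have h0 : (p.takeUntil v hv).length = 0 := by omega
  exact (SimpleGraph.Walk.eq_of_length_eq_zero h0).symm

/-- Only the last vertex of a min path lies in B. -/
lemma min_path_unique_end [DecidableEq V] {H A B : Set V} {a b : V} {p : G.Walk a b}
    (haA : a ∈ A) (haH : a ∈ H) (hbB : b ∈ B) (hbH : b ∈ H)
    (hpH : ∀ v ∈ p.support, v ∈ H)
    (hmin : ∀ (a' b' : V) (q : G.Walk a' b'), a' ∈ A → a' ∈ H → b' ∈ B → b' ∈ H →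
      (∀ v ∈ q.support, v ∈ H) → p.length ≤ q.length) :
    ∀ v ∈ p.support, v ∈ B → v = b := by
  intro v hv hvB
  have hq : ∀ z ∈ (p.takeUntil v hv).support, z ∈ H := fun z hz =>
    hpH z (SimpleGraph.Walk.support_takeUntil_subset _ _ hz)
  have := hmin a v (p.takeUntil v hv) haA haH hvB (hpH v hv) hq
  have hsplit : (p.takeUntil v hv).length + (p.dropUntil v hv).length = p.length := by
    rw [← SimpleGraph.Walk.length_append, SimpleGraph.Walk.take_spec]
  have h0 : (p.dropUntil v hv).length = 0 := by omega
  exact SimpleGraph.Walk.eq_of_length_eq_zero h0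



variable {V : Type} {G : SimpleGraph V}


lemma mem_support_concat {a b w : V} (p : G.Walk a b) (h : G.Adj b w) (v : V) :
    v ∈ (p.concat h).support ↔ v ∈ p.support ∨ v = w := by
  rw [SimpleGraph.Walk.support_concat, List.mem_append]
  simp


lemma isPath_concat {a b w : V} {p : G.Walk a b} (hp : p.IsPath) (h : G.Adj b w)
    (hw : w ∉ p.support) : (p.concat h).IsPath := by
  rw [SimpleGraph.Walk.concat_eq_append]
  apply isPath_append hp
  · rw [SimpleGraph.Walk.isPath_def]
    simp [h.ne]
  · intro v hv hv'
    simp only [SimpleGraph.Walk.support_cons, SimpleGraph.Walk.support_nil,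
      List.mem_cons, List.mem_singleton] at hv'
    rcases hv' with h' | h' | h'
    · exact h'
    · exact absurd (h' ▸ hv) hw
    · simp at h'

lemma mem_triple {x : Fin 3 → V} (i : Fin 3) : x i ∈ ({x 0, x 1, x 2} : Set V) := by
  fin_cases i <;> simp

lemma eq_x_of_mem_triple {x : Fin 3 → V} {v : V} (h : v ∈ ({x 0, x 1, x 2} : Set V)) :
    ∃ i, v = x i := by
  rcases h with h | h | h
  exacts [⟨0, h⟩, ⟨1, h⟩, ⟨2, by simpa using h⟩]

lemma build2 (G : SimpleGraph V) (x : Fin 3 → V) (hx : Function.Injective x) (H : Set V)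
    (hdisj : ∀ i, x i ∉ H) (a : V) (haH : a ∈ H) (t : Fin 3 → V)
    (q : ∀ i, G.Walk a (t i))
    (hpath : ∀ i, (q i).IsPath)
    (hsub : ∀ i, ∀ v ∈ (q i).support, v ∈ H)
    (hcover : ∀ v ∈ H, ∃ i, v ∈ (q i).support)
    (hdis : ∀ i j, i ≠ j → ∀ v, v ∈ (q i).support → v ∈ (q j).support → v = a)
    (hnoedge : ∀ i j, i ≠ j → ∀ u v, u ∈ (q i).support → v ∈ (q j).support →
      u ≠ a → v ≠ a → ¬ G.Adj u v)
    (hxno : ∀ i j, i ≠ j → ∀ v, v ∈ (q j).support → v ≠ a → ¬ G.Adj (x i) v)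
    (hadj : ∀ i, G.Adj (t i) (x i)) :
    (∃ a : V, a ∈ H ∧ ∃ p : (i : Fin 3) → G.Walk a (x i),
      (∀ i, (p i).IsPath) ∧
      H = (⋃ i, suppSet G (p i)) \ {x 0, x 1, x 2} ∧
      (∀ i j, i ≠ j → Disjoint (suppSet G (p i) \ {a}) (suppSet G (p j) \ {a})) ∧
      (∀ i j, i ≠ j → ∀ u v : V, u ∈ suppSet G (p i) \ {a} →
        v ∈ suppSet G (p j) \ {a} → G.Adj u v → s(u, v) = s(x i, x j))) := by
  have hxq : ∀ i j, x i ∉ (q j).support := fun i j h => hdisj i (hsub j _ h)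
  refine ⟨a, haH, fun i => (q i).concat (hadj i), fun i => isPath_concat (hpath i) _ (hxq i i),
    ?_, ?_, ?_⟩
  · ext v
    constructor
    · intro hv
      obtain ⟨i, hi⟩ := hcover v hv
      refine ⟨Set.mem_iUnion.mpr ⟨i, ?_⟩, ?_⟩
      · show v ∈ ((q i).concat (hadj i)).support
        rw [mem_support_concat]
        exact Or.inl hi
      · intro hmem
        obtain ⟨k, rfl⟩ := eq_x_of_mem_triple hmem
        exact hdisj k hv
    · rintro ⟨hv, hnv⟩
      obtain ⟨i, hi⟩ := Set.mem_iUnion.mp hv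
      have hi' : v ∈ ((q i).concat (hadj i)).support := hi
      rw [mem_support_concat] at hi'
      rcases hi' with h | h
      · exact hsub i v h
      · exact absurd (h ▸ mem_triple i) hnv
  · intro i j hij
    rw [Set.disjoint_left]
    rintro v ⟨hv1, hv1a⟩ ⟨hv2, hv2a⟩
    have hv1' : v ∈ ((q i).concat (hadj i)).support := hv1
    have hv2' : v ∈ ((q j).concat (hadj j)).support := hv2
    rw [mem_support_concat] at hv1' hv2'
    simp only [Set.mem_singleton_iff] at hv1a hv2a
    rcases hv1' with h1 | h1 <;> rcases hv2' with h2 | h2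
    · exact hv1a (hdis i j hij v h1 h2)
    · exact hxq j i (h2 ▸ h1)
    · exact hxq i j (h1 ▸ h2)
    · exact hij (hx (h1.symm.trans h2 ▸ rfl))
  · intro i j hij u v hu hv hadj'
    obtain ⟨hu1, hua⟩ := hu
    obtain ⟨hv1, hva⟩ := hv
    simp only [Set.mem_singleton_iff] at hua hva
    have hu' : u ∈ ((q i).concat (hadj i)).support := hu1
    have hv' : v ∈ ((q j).concat (hadj j)).support := hv1
    rw [mem_support_concat] at hu' hv'
    rcases hu' with h1 | h1 <;> rcases hv' with h2 | h2
    · exact absurd hadj' (hnoedge i j hij u v h1 h2 hua hva)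
    · subst h2
      exact absurd hadj'.symm (hxno j i (Ne.symm hij) u h1 hua)
    · subst h1
      exact absurd hadj' (hxno i j hij v h2 hva)
    · subst h1; subst h2; rfl

variable {V : Type} {G : SimpleGraph V}

lemma build3 (G : SimpleGraph V) (x : Fin 3 → V) (hx : Function.Injective x) (H : Set V)
    (hdisj : ∀ i, x i ∉ H) (c : Fin 3 → V) (hcH : ∀ i, c i ∈ H)
    (hctri : ∀ i j, i ≠ j → G.Adj (c i) (c j)) (t : Fin 3 → V)
    (q : ∀ i, G.Walk (c i) (t i))
    (hpath : ∀ i, (q i).IsPath)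
    (hsub : ∀ i, ∀ v ∈ (q i).support, v ∈ H)
    (hcover : ∀ v ∈ H, ∃ i, v ∈ (q i).support)
    (hdis : ∀ i j, i ≠ j → ∀ v, v ∈ (q i).support → v ∈ (q j).support → False)
    (hedge : ∀ i j, i ≠ j → ∀ u v, u ∈ (q i).support → v ∈ (q j).support →
      G.Adj u v → u = c i ∧ v = c j)
    (hxno : ∀ i j, i ≠ j → ∀ v, v ∈ (q j).support → ¬ G.Adj (x i) v)
    (hadj : ∀ i, G.Adj (t i) (x i)) :
    (∃ a : Fin 3 → V, (∀ i, a i ∈ H) ∧ (∀ i j, i ≠ j → G.Adj (a i) (a j)) ∧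
      ∃ p : (i : Fin 3) → G.Walk (a i) (x i),
        (∀ i, (p i).IsPath) ∧
        H = (⋃ i, suppSet G (p i)) \ {x 0, x 1, x 2} ∧
        (∀ i j, i ≠ j → Disjoint (suppSet G (p i)) (suppSet G (p j))) ∧
        (∀ i j, i ≠ j → ∀ u v : V, u ∈ suppSet G (p i) → v ∈ suppSet G (p j) →
          G.Adj u v → s(u, v) = s(a i, a j) ∨ s(u, v) = s(x i, x j))) := by
  have hxq : ∀ i j, x i ∉ (q j).support := fun i j h => hdisj i (hsub j _ h)
  refine ⟨c, hcH, hctri, fun i => (q i).concat (hadj i),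
    fun i => isPath_concat (hpath i) _ (hxq i i), ?_, ?_, ?_⟩
  · ext v
    constructor
    · intro hv
      obtain ⟨i, hi⟩ := hcover v hv
      refine ⟨Set.mem_iUnion.mpr ⟨i, ?_⟩, ?_⟩
      · show v ∈ ((q i).concat (hadj i)).support
        rw [mem_support_concat]
        exact Or.inl hi
      · intro hmem
        obtain ⟨k, rfl⟩ := eq_x_of_mem_triple hmem
        exact hdisj k hv
    · rintro ⟨hv, hnv⟩
      obtain ⟨i, hi⟩ := Set.mem_iUnion.mp hv
      have hi' : v ∈ ((q i).concat (hadj i)).support := hi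
      rw [mem_support_concat] at hi'
      rcases hi' with h | h
      · exact hsub i v h
      · exact absurd (h ▸ mem_triple i) hnv
  · intro i j hij
    rw [Set.disjoint_left]
    rintro v hv1 hv2
    have hv1' : v ∈ ((q i).concat (hadj i)).support := hv1
    have hv2' : v ∈ ((q j).concat (hadj j)).support := hv2
    rw [mem_support_concat] at hv1' hv2'
    rcases hv1' with h1 | h1 <;> rcases hv2' with h2 | h2
    · exact hdis i j hij v h1 h2
    · exact hxq j i (h2 ▸ h1)
    · exact hxq i j (h1 ▸ h2)
    · exact hij (hx (h1.symm.trans h2 ▸ rfl))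
  · intro i j hij u v hu hv hadj'
    have hu' : u ∈ ((q i).concat (hadj i)).support := hu
    have hv' : v ∈ ((q j).concat (hadj j)).support := hv
    rw [mem_support_concat] at hu' hv'
    rcases hu' with h1 | h1 <;> rcases hv' with h2 | h2
    · obtain ⟨rfl, rfl⟩ := hedge i j hij u v h1 h2 hadj'
      exact Or.inl rfl
    · subst h2
      exact absurd hadj'.symm (hxno j i (Ne.symm hij) u h1)
    · subst h1
      exact absurd hadj' (hxno i j hij v h2)
    · subst h1; subst h2; exact Or.inr rfl


variable {V : Type} {G : SimpleGraph V}


lemma build1 (G : SimpleGraph V) (x : Fin 3 → V) (hx : Function.Injective x) (H : Set V)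
    (hdisj : ∀ i, x i ∉ H) (i j k : Fin 3) (hij : i ≠ j) (hik : i ≠ k) (hjk : j ≠ k)
    {u v : V} (w : G.Walk u v) (hw : w.IsPath)
    (hind : ∀ u' v', u' ∈ w.support → v' ∈ w.support → G.Adj u' v' → s(u', v') ∈ w.edges)
    (hsupp : {z | z ∈ w.support} = H)
    (hNu : G.Adj (x i) u) (hNv : G.Adj (x j) v)
    (hNi : ∀ z, z ∈ H → G.Adj (x i) z → z = u)
    (hNj : ∀ z, z ∈ H → G.Adj (x j) z → z = v)
    (hk2 : ∃ a b, a ∈ H ∧ b ∈ H ∧ a ≠ b ∧ G.Adj (x k) a ∧ G.Adj (x k) b) :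
    (∃ i j k : Fin 3, i ≠ j ∧ i ≠ k ∧ j ≠ k ∧
      ∃ p : G.Walk (x i) (x j), p.IsPath ∧
        (InducedWalk G p ∨ (G.Adj (x i) (x j) ∧ ∀ u v : V, u ∈ p.support →
          v ∈ p.support → G.Adj u v → s(u, v) ∈ p.edges ∨ s(u, v) = s(x i, x j))) ∧
        H = suppSet G p \ {x i, x j} ∧
        ((∃ a b : V, a ∈ H ∧ b ∈ H ∧ G.Adj (x k) a ∧ G.Adj (x k) b ∧ a ≠ b ∧ ¬ G.Adj a b) ∨
          (∃ a b : V, a ≠ b ∧ G.Adj a b ∧ G.neighborSet (x k) ∩ H = {a, b}))) := by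
  have hmemH : ∀ z, z ∈ w.support ↔ z ∈ H := fun z => by rw [← hsupp]; rfl
  have hxw : ∀ l, x l ∉ w.support := fun l h => hdisj l ((hmemH _).mp h)
  have hxij : x i ≠ x j := fun h => hij (hx h)
  set inner : G.Walk u (x j) := w.concat hNv.symm with hinner
  have hinnerP : inner.IsPath := isPath_concat hw _ (hxw j)
  have hxiinner : x i ∉ inner.support := by
    rw [hinner, mem_support_concat]
    rintro (h | h)
    · exact hxw i h
    · exact hxij h
  set p : G.Walk (x i) (x j) := SimpleGraph.Walk.cons hNu inner with hp
  have hpP : p.IsPath := hinnerP.cons hxiinner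
  have hpsupp : ∀ z, z ∈ p.support ↔ z = x i ∨ z ∈ w.support ∨ z = x j := by
    intro z
    rw [hp, SimpleGraph.Walk.support_cons, List.mem_cons, hinner, mem_support_concat]
  have hheadedge : s(x i, u) ∈ p.edges := by
    rw [hp, SimpleGraph.Walk.edges_cons]
    exact List.mem_cons_self
  have htailedge : s(v, x j) ∈ p.edges := by
    rw [hp, SimpleGraph.Walk.edges_cons, hinner, SimpleGraph.Walk.edges_concat]
    refine List.mem_cons_of_mem _ ?_
    rw [List.concat_eq_append, List.mem_append]
    exact Or.inr (List.mem_singleton.mpr rfl)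
  have hwedge : ∀ e ∈ w.edges, e ∈ p.edges := by
    intro e he
    rw [hp, SimpleGraph.Walk.edges_cons, hinner, SimpleGraph.Walk.edges_concat]
    refine List.mem_cons_of_mem _ ?_
    rw [List.concat_eq_append, List.mem_append]
    exact Or.inl he
  have key : ∀ u' v', u' ∈ p.support → v' ∈ p.support → G.Adj u' v' →
      s(u', v') ∈ p.edges ∨ s(u', v') = s(x i, x j) := by
    intro u' v' hu' hv' hadj
    rw [hpsupp] at hu' hv'
    rcases hu' with rfl | hu' | rfl <;> rcases hv' with rfl | hv' | rfl
    · exact absurd hadj (G.loopless.irrefl _)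
    · left; rw [hNi v' ((hmemH _).mp hv') hadj]; exact hheadedge
    · right; rfl
    · left
      have := hNi u' ((hmemH _).mp hu') hadj.symm
      subst this
      rw [Sym2.eq_swap]; exact hheadedge
    · exact Or.inl (hwedge _ (hind u' v' hu' hv' hadj))
    · left
      have := hNj u' ((hmemH _).mp hu') hadj.symm
      subst this
      exact htailedge
    · right; rw [Sym2.eq_swap]
    · left
      have := hNj v' ((hmemH _).mp hv') hadj
      subst this
      rw [Sym2.eq_swap]; exact htailedge
    · exact absurd hadj (G.loopless.irrefl _)
  refine ⟨i, j, k, hij, hik, hjk, p, hpP, ?_, ?_, ?_⟩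
  · by_cases hxx : G.Adj (x i) (x j)
    · exact Or.inr ⟨hxx, key⟩
    · left
      intro u' v' hu' hv' hadj
      rcases key u' v' hu' hv' hadj with h | h
      · exact h
      · exfalso
        rw [Sym2.eq_iff] at h
        rcases h with ⟨rfl, rfl⟩ | ⟨rfl, rfl⟩
        · exact hxx hadj
        · exact hxx hadj.symm
  · ext z
    constructor
    · intro hz
      refine ⟨(hpsupp z).mpr (Or.inr (Or.inl ((hmemH z).mpr hz))), ?_⟩
      rintro (rfl | rfl)
      · exact hdisj i hz
      · exact hdisj j hz
    · rintro ⟨hz, hnz⟩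
      have hz' := (hpsupp z).mp hz
      rcases hz' with rfl | hz' | rfl
      · exact absurd (Set.mem_insert _ _) hnz
      · exact (hmemH z).mp hz'
      · exact absurd (Set.mem_insert_iff.mpr (Or.inr rfl)) hnz
  · by_cases hnon : ∃ a b : V, a ∈ H ∧ b ∈ H ∧ G.Adj (x k) a ∧ G.Adj (x k) b ∧ a ≠ b ∧ ¬ G.Adj a b
    · exact Or.inl hnon
    · push_neg at hnon
      obtain ⟨a, b, haH, hbH, hab, hka, hkb⟩ := hk2
      have hadjab : G.Adj a b := hnon a b haH hbH hka hkb hab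
      refine Or.inr ⟨a, b, hab, hadjab, ?_⟩
      ext z
      constructor
      · rintro ⟨hz1, hz2⟩
        have hz1' : G.Adj (x k) z := hz1
        by_contra hzz
        simp only [Set.mem_insert_iff, Set.mem_singleton_iff, not_or] at hzz
        obtain ⟨hza, hzb⟩ := hzz
        have h1 : G.Adj z a := hnon z a hz2 haH hz1' hka hza
        have h2 : G.Adj z b := hnon z b hz2 hbH hz1' hkb hzb
        exact no_triangle hw
          (hind a b ((hmemH a).mpr haH) ((hmemH b).mpr hbH) hadjab)
          (hind a z ((hmemH a).mpr haH) ((hmemH z).mpr hz2) h1.symm)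
          (hind b z ((hmemH b).mpr hbH) ((hmemH z).mpr hz2) h2.symm)
          hab (Ne.symm hza) (Ne.symm hzb)
      · rintro (rfl | rfl)
        · exact ⟨hka, haH⟩
        · exact ⟨hkb, hbH⟩


variable {V : Type} {G : SimpleGraph V}
section DE2
variable [DecidableEq V]

lemma mem_support_split {a b u : V} (p : G.Walk a b) (hu : u ∈ p.support) (v : V) :
    v ∈ p.support ↔ v ∈ (p.takeUntil u hu).support ∨ v ∈ (p.dropUntil u hu).support := by
  constructor
  · intro hv
    conv at hv => rw [← SimpleGraph.Walk.take_spec p hu]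
    rw [SimpleGraph.Walk.support_append, List.mem_append] at hv
    rcases hv with h | h
    · exact Or.inl h
    · exact Or.inr (List.mem_of_mem_tail h)
  · rintro (h | h)
    · exact SimpleGraph.Walk.support_takeUntil_subset p hu h
    · exact SimpleGraph.Walk.support_dropUntil_subset p hu h

lemma mem_edges_split {a b u : V} (p : G.Walk a b) (hu : u ∈ p.support) (e : Sym2 V) :
    e ∈ p.edges ↔ e ∈ (p.takeUntil u hu).edges ∨ e ∈ (p.dropUntil u hu).edges := by
  conv_lhs => rw [← SimpleGraph.Walk.take_spec p hu]
  rw [SimpleGraph.Walk.edges_append, List.mem_append]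

lemma mem_takeUntil_or {a b : V} (p : G.Walk a b) {u v : V}
    (hu : u ∈ p.support) (hv : v ∈ p.support) :
    v ∈ (p.takeUntil u hu).support ∨ u ∈ (p.takeUntil v hv).support := by
  induction p with
  | nil =>
    rw [SimpleGraph.Walk.mem_support_nil_iff] at hu hv
    subst hu; subst hv
    left; exact SimpleGraph.Walk.start_mem_support _
  | @cons a c b r q ih =>
    by_cases hau : a = u
    · subst hau
      right; exact SimpleGraph.Walk.start_mem_support _
    · by_cases hav : a = v
      · subst hav
        left; exact SimpleGraph.Walk.start_mem_support _
      · have hu' : u ∈ q.support := by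
          rcases SimpleGraph.Walk.mem_support_iff _ |>.mp hu with h | h
          · exact absurd h.symm hau
          · exact h
        have hv' : v ∈ q.support := by
          rcases SimpleGraph.Walk.mem_support_iff _ |>.mp hv with h | h
          · exact absurd h.symm hav
          · exact h
        rw [takeUntil_cons r q hau hu hu', takeUntil_cons r q hav hv hv']
        simp only [SimpleGraph.Walk.support_cons, List.mem_cons]
        rcases ih hu' hv' with h | h
        · exact Or.inl (Or.inr h)
        · exact Or.inr (Or.inr h)

end DE2

def pick3 {α : Fin 3 → Sort*} (a : α 0) (b : α 1) (c : α 2) : ∀ i, α i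
  | ⟨0, _⟩ => a
  | ⟨1, _⟩ => b
  | ⟨2, _⟩ => c

@[simp] lemma pick3_zero {α : Fin 3 → Sort*} (a : α 0) (b : α 1) (c : α 2) :
    pick3 a b c 0 = a := rfl
@[simp] lemma pick3_one {α : Fin 3 → Sort*} (a : α 0) (b : α 1) (c : α 2) :
    pick3 a b c 1 = b := rfl
@[simp] lemma pick3_two {α : Fin 3 → Sort*} (a : α 0) (b : α 1) (c : α 2) :
    pick3 a b c 2 = c := rfl



end Infra12

/-- the three-vertex-attachments lemma. -/
theorem stmt12 {V : Type} (G : SimpleGraph V) (x : Fin 3 → V)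
    (hx : Function.Injective x) (H : Set V)
    (hdisj : ∀ i, x i ∉ H) (hconn : (G.induce H).Connected)
    (hnbr : ∀ i, ∃ h ∈ H, G.Adj (x i) h)
    (hmin : ∀ H' : Set V, H' ⊆ H → (G.induce H').Connected →
      (∀ i, ∃ h ∈ H', G.Adj (x i) h) → H' = H) :
    (∃ i j k : Fin 3, i ≠ j ∧ i ≠ k ∧ j ≠ k ∧
      ∃ p : G.Walk (x i) (x j), p.IsPath ∧
        (InducedWalk G p ∨ (G.Adj (x i) (x j) ∧ ∀ u v : V, u ∈ p.support →
          v ∈ p.support → G.Adj u v → s(u, v) ∈ p.edges ∨ s(u, v) = s(x i, x j))) ∧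
        H = suppSet G p \ {x i, x j} ∧
        ((∃ a b : V, a ∈ H ∧ b ∈ H ∧ G.Adj (x k) a ∧ G.Adj (x k) b ∧ a ≠ b ∧ ¬ G.Adj a b) ∨
          (∃ a b : V, a ≠ b ∧ G.Adj a b ∧ G.neighborSet (x k) ∩ H = {a, b}))) ∨
    (∃ a : V, a ∈ H ∧ ∃ p : (i : Fin 3) → G.Walk a (x i),
      (∀ i, (p i).IsPath) ∧
      H = (⋃ i, suppSet G (p i)) \ {x 0, x 1, x 2} ∧
      (∀ i j, i ≠ j → Disjoint (suppSet G (p i) \ {a}) (suppSet G (p j) \ {a})) ∧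
      (∀ i j, i ≠ j → ∀ u v : V, u ∈ suppSet G (p i) \ {a} →
        v ∈ suppSet G (p j) \ {a} → G.Adj u v → s(u, v) = s(x i, x j))) ∨
    (∃ a : Fin 3 → V, (∀ i, a i ∈ H) ∧ (∀ i j, i ≠ j → G.Adj (a i) (a j)) ∧
      ∃ p : (i : Fin 3) → G.Walk (a i) (x i),
        (∀ i, (p i).IsPath) ∧
        H = (⋃ i, suppSet G (p i)) \ {x 0, x 1, x 2} ∧
        (∀ i j, i ≠ j → Disjoint (suppSet G (p i)) (suppSet G (p j))) ∧
        (∀ i j, i ≠ j → ∀ u v : V, u ∈ suppSet G (p i) → v ∈ suppSet G (p j) →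
          G.Adj u v → s(u, v) = s(a i, a j) ∨ s(u, v) = s(x i, x j))) := by
  classical
  have hNne : ∀ i, ({z | G.Adj (x i) z} ∩ H).Nonempty := fun i => by
    obtain ⟨h, hH, hadj⟩ := hnbr i
    exact ⟨h, hadj, hH⟩
  obtain ⟨a0, a1, P, ha0N, ha0H, ha1N, ha1H, hPpath, hPH, hPmin⟩ :=
    exists_min_path (G := G) H {z | G.Adj (x 0) z} {z | G.Adj (x 1) z} hconn (hNne 0) (hNne 1)
  have hA0 : G.Adj (x 0) a0 := ha0N
  have hA1 : G.Adj (x 1) a1 := ha1N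
  have hPind := min_path_induced ha0N ha0H ha1N ha1H hPH hPmin
  have hPu0 : ∀ v ∈ P.support, G.Adj (x 0) v → v = a0 := fun v hv h =>
    min_path_unique_start ha0N ha0H ha1N ha1H hPH hPmin v hv h
  have hPu1 : ∀ v ∈ P.support, G.Adj (x 1) v → v = a1 := fun v hv h =>
    min_path_unique_end ha0N ha0H ha1N ha1H hPH hPmin v hv h
  have hmin' : ∀ {α β : V} (wlk : G.Walk α β), (∀ v ∈ wlk.support, v ∈ H) →
      (∀ i, ∃ z ∈ {v | v ∈ wlk.support}, G.Adj (x i) z) → ∀ v, v ∈ wlk.support ↔ v ∈ H := by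
    intro α β wlk hsub hatt v
    rw [← hmin {v | v ∈ wlk.support} (fun z hz => hsub z hz)
      (induce_connected_of_walk wlk) hatt]
    rfl
  by_cases hA : ∃ t ∈ P.support, G.Adj (x 2) t
  · -- Case A : P meets N(x 2), so H is the support of P
    obtain ⟨t, htP, htN⟩ := hA
    have hHeq : ∀ v, v ∈ P.support ↔ v ∈ H := by
      apply hmin' P hPH
      intro i
      fin_cases i
      · exact ⟨a0, P.start_mem_support, hA0⟩
      · exact ⟨a1, P.end_mem_support, hA1⟩
      · exact ⟨t, htP, htN⟩
    by_cases hk2 : ∃ a b : V, a ∈ H ∧ b ∈ H ∧ a ≠ b ∧ G.Adj (x 2) a ∧ G.Adj (x 2) b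
    · -- outcome (i)
      obtain ⟨a, b, h1, h2, h3, h4, h5⟩ := hk2
      exact Or.inl (build1 G x hx H hdisj 0 1 2 (by decide) (by decide) (by decide) P hPpath
        hPind (Set.ext hHeq) hA0 hA1
        (fun z hz hadj => hPu0 z ((hHeq z).mpr hz) hadj)
        (fun z hz hadj => hPu1 z ((hHeq z).mpr hz) hadj)
        ⟨a, b, h1, h2, h3, h4, h5⟩)
    · -- x 2 has a unique neighbour t in H : outcome (ii)
      push_neg at hk2
      have ht2 : ∀ z, z ∈ H → G.Adj (x 2) z → z = t := by
        intro z hz hzadj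
        by_contra hne
        exact hk2 z t hz ((hHeq t).mp htP) hne hzadj htN
      have htH : t ∈ H := (hHeq t).mp htP
      set TK := P.takeUntil t htP with hTK
      set DR := P.dropUntil t htP with hDR
      have hjun : ∀ v, v ∈ TK.support → v ∈ DR.support → v = t := junction hPpath htP
      have hsplitP : ∀ v, v ∈ P.support ↔ v ∈ TK.support ∨ v ∈ DR.support :=
        mem_support_split P htP
      have hQ0mem : ∀ v, v ∈ TK.reverse.support ↔ v ∈ TK.support := by
        intro v
        rw [SimpleGraph.Walk.support_reverse, List.mem_reverse]
      have hTKsub : ∀ v ∈ TK.support, v ∈ P.support :=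
        fun v hv => SimpleGraph.Walk.support_takeUntil_subset P htP hv
      have hDRsub : ∀ v ∈ DR.support, v ∈ P.support :=
        fun v hv => SimpleGraph.Walk.support_dropUntil_subset P htP hv
      have ha0TK : a0 ∈ TK.support := TK.start_mem_support
      have ha1DR : a1 ∈ DR.support := DR.end_mem_support
      refine Or.inr (Or.inl (build2 G x hx H hdisj t htH (pick3 a0 a1 t)
        (pick3 (α := fun i => G.Walk t (pick3 (α := fun _ => V) a0 a1 t i))
          TK.reverse DR SimpleGraph.Walk.nil) ?_ ?_ ?_ ?_ ?_ ?_ ?_))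
      · intro i
        fin_cases i
        · exact (hPpath.takeUntil htP).reverse
        · exact hPpath.dropUntil htP
        · exact SimpleGraph.Walk.IsPath.nil
      · intro i
        fin_cases i
        · intro v hv
          exact hPH v (hTKsub v ((hQ0mem v).mp hv))
        · intro v hv
          exact hPH v (hDRsub v hv)
        · intro v hv
          exact (SimpleGraph.Walk.mem_support_nil_iff.mp hv) ▸ htH
      · intro v hv
        rcases (hsplitP v).mp ((hHeq v).mpr hv) with h | h
        · exact ⟨0, (hQ0mem v).mpr h⟩
        · exact ⟨1, h⟩
      · intro i j hij
        fin_cases i <;> fin_cases j <;> simp only [pick3_zero, pick3_one, pick3_two]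
        · exact absurd rfl hij
        · intro v hv1 hv2
          exact hjun v ((hQ0mem v).mp hv1) hv2
        · intro v _ hv2
          exact SimpleGraph.Walk.mem_support_nil_iff.mp hv2
        · intro v hv1 hv2
          exact hjun v ((hQ0mem v).mp hv2) hv1
        · exact absurd rfl hij
        · intro v _ hv2
          exact SimpleGraph.Walk.mem_support_nil_iff.mp hv2
        · intro v hv1 _
          exact SimpleGraph.Walk.mem_support_nil_iff.mp hv1
        · intro v hv1 _
          exact SimpleGraph.Walk.mem_support_nil_iff.mp hv1
        · exact absurd rfl hij
      · intro i j hij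
        fin_cases i <;> fin_cases j <;> simp only [pick3_zero, pick3_one, pick3_two]
        · exact absurd rfl hij
        · intro u v hu hv hut hvt hadj
          have he := hPind u v (hTKsub u ((hQ0mem u).mp hu)) (hDRsub v hv) hadj
          rcases (mem_edges_split P htP _).mp he with h | h
          · exact hvt (hjun v (SimpleGraph.Walk.snd_mem_support_of_mem_edges _ h) hv)
          · exact hut (hjun u ((hQ0mem u).mp hu)
              (SimpleGraph.Walk.fst_mem_support_of_mem_edges _ h))
        · intro u v hu hv hut hvt hadj
          exact hvt (SimpleGraph.Walk.mem_support_nil_iff.mp hv)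
        · intro u v hu hv hut hvt hadj
          have he := hPind u v (hDRsub u hu) (hTKsub v ((hQ0mem v).mp hv)) hadj
          rcases (mem_edges_split P htP _).mp he with h | h
          · exact hut (hjun u (SimpleGraph.Walk.fst_mem_support_of_mem_edges _ h) hu)
          · exact hvt (hjun v ((hQ0mem v).mp hv)
              (SimpleGraph.Walk.snd_mem_support_of_mem_edges _ h))
        · exact absurd rfl hij
        · intro u v hu hv hut hvt hadj
          exact hvt (SimpleGraph.Walk.mem_support_nil_iff.mp hv)
        · intro u v hu hv hut hvt hadj
          exact hut (SimpleGraph.Walk.mem_support_nil_iff.mp hu)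
        · intro u v hu hv hut hvt hadj
          exact hut (SimpleGraph.Walk.mem_support_nil_iff.mp hu)
        · exact absurd rfl hij
      · intro i j hij
        fin_cases i <;> fin_cases j <;> simp only [pick3_zero, pick3_one, pick3_two]
        · exact absurd rfl hij
        · -- x 0 has no neighbour in DR \ {t}
          intro v hv hvt hadj
          have hva0 : v = a0 := hPu0 v (hDRsub v hv) hadj
          subst hva0
          exact hvt (hjun v ha0TK hv)
        · intro v hv hvt hadj
          exact hvt (SimpleGraph.Walk.mem_support_nil_iff.mp hv)
        · -- x 1 has no neighbour in TK \ {t}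
          intro v hv hvt hadj
          have hva1 : v = a1 := hPu1 v (hTKsub v ((hQ0mem v).mp hv)) hadj
          subst hva1
          exact hvt (hjun v ((hQ0mem v).mp hv) ha1DR)
        · exact absurd rfl hij
        · intro v hv hvt hadj
          exact hvt (SimpleGraph.Walk.mem_support_nil_iff.mp hv)
        · -- x 2 has no neighbour except t
          intro v hv hvt hadj
          exact hvt (ht2 v (hPH v (hTKsub v ((hQ0mem v).mp hv))) hadj)
        · intro v hv hvt hadj
          exact hvt (ht2 v (hPH v (hDRsub v hv)) hadj)
        · exact absurd rfl hij
      · intro i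
        fin_cases i
        · exact hA0.symm
        · exact hA1.symm
        · exact htN.symm
  · -- Case B : P does not meet N(x 2)
    push_neg at hA
    have hBne : ({z | z ∈ P.support} ∩ H).Nonempty := ⟨a0, P.start_mem_support, ha0H⟩
    obtain ⟨b2, c, R, hb2N, hb2H, hcP', hcH, hRpath, hRH, hRmin⟩ :=
      exists_min_path (G := G) H {z | G.Adj (x 2) z} {z | z ∈ P.support} hconn (hNne 2) hBne
    have hB2 : G.Adj (x 2) b2 := hb2N
    have hcP : c ∈ P.support := hcP'
    have hRu2 : ∀ v ∈ R.support, G.Adj (x 2) v → v = b2 := fun v hv h =>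
      min_path_unique_start hb2N hb2H hcP' hcH hRH hRmin v hv h
    have hRuP : ∀ v ∈ R.support, v ∈ P.support → v = c := fun v hv h =>
      min_path_unique_end hb2N hb2H hcP' hcH hRH hRmin v hv h
    have hRind := min_path_induced hb2N hb2H hcP' hcH hRH hRmin
    have hcb2 : c ≠ b2 := fun h => hA c hcP (h ▸ hB2)
    obtain ⟨c', hcc', W, hWdef⟩ := SimpleGraph.Walk.exists_eq_cons_of_ne hcb2 R.reverse
    have hconsP : (SimpleGraph.Walk.cons hcc' W).IsPath := hWdef ▸ hRpath.reverse
    have hWpath : W.IsPath := hconsP.of_cons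
    have hcW : c ∉ W.support := ((SimpleGraph.Walk.cons_isPath_iff _ _).mp hconsP).2
    have hmemR : ∀ v, v ∈ R.support ↔ (v = c ∨ v ∈ W.support) := by
      intro v
      rw [← List.mem_reverse, ← SimpleGraph.Walk.support_reverse, hWdef,
        SimpleGraph.Walk.support_cons, List.mem_cons]
    have hWsubR : ∀ v ∈ W.support, v ∈ R.support := fun v hv => (hmemR v).mpr (Or.inr hv)
    have hWH : ∀ v ∈ W.support, v ∈ H := fun v hv => hRH v (hWsubR v hv)
    have hc'W : c' ∈ W.support := W.start_mem_support
    have hWdisjP : ∀ v ∈ W.support, v ∉ P.support := by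
      intro v hv hvP
      have := hRuP v (hWsubR v hv) hvP
      subst this
      exact hcW hv
    have hc'P : c' ∉ P.support := hWdisjP c' hc'W
    have hc'H : c' ∈ H := hWH c' hc'W
    have hpen : ∀ v ∈ W.support, ∀ z ∈ P.support, G.Adj v z → v = c' := by
      intro v hv z hz hadj
      have hvR : v ∈ R.support := hWsubR v hv
      have hvc : v ≠ c := fun h => hcW (h ▸ hv)
      have hzH : z ∈ H := hPH z hz
      have hsupc : ∀ w ∈ ((R.takeUntil v hvR).concat hadj).support, w ∈ H := by
        intro w hw
        rw [mem_support_concat] at hw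
        rcases hw with h | h
        · exact hRH w (SimpleGraph.Walk.support_takeUntil_subset R hvR h)
        · exact h ▸ hzH
      have hcomp := hRmin b2 z ((R.takeUntil v hvR).concat hadj) hb2N hb2H hz hzH hsupc
      rw [SimpleGraph.Walk.length_concat] at hcomp
      have hsplit : (R.takeUntil v hvR).length + (R.dropUntil v hvR).length = R.length := by
        rw [← SimpleGraph.Walk.length_append, SimpleGraph.Walk.take_spec]
      have hd1 : (R.dropUntil v hvR).length = 1 := by
        have hne0 : (R.dropUntil v hvR).length ≠ 0 := fun h0 =>
          hvc (SimpleGraph.Walk.eq_of_length_eq_zero h0)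
        omega
      have hedge : s(v, c) ∈ R.edges :=
        SimpleGraph.Walk.edges_dropUntil_subset R hvR (length_eq_one_edge _ hd1)
      have hedge' : s(c, v) ∈ R.reverse.edges := by
        rw [SimpleGraph.Walk.edges_reverse, List.mem_reverse, Sym2.eq_swap]
        exact hedge
      rw [hWdef] at hedge'
      exact edge_endpoint_unique hconsP hedge'
    have hZsup : ∀ v, v ∈ (P.append ((P.dropUntil c hcP).reverse.append R.reverse)).support ↔
        (v ∈ P.support ∨ v ∈ R.support) := by
      intro v
      simp only [SimpleGraph.Walk.mem_support_append_iff, SimpleGraph.Walk.support_reverse,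
        List.mem_reverse]
      constructor
      · rintro (h | h | h)
        · exact Or.inl h
        · exact Or.inl (SimpleGraph.Walk.support_dropUntil_subset P hcP h)
        · exact Or.inr h
      · rintro (h | h)
        · exact Or.inl h
        · exact Or.inr (Or.inr h)
    have hHPR : ∀ v, v ∈ H ↔ (v ∈ P.support ∨ v ∈ R.support) := by
      have hZ := hmin' (P.append ((P.dropUntil c hcP).reverse.append R.reverse)) ?_ ?_
      · intro v
        rw [← hZ v]
        exact hZsup v
      · intro v hv
        rcases (hZsup v).mp hv with h | h
        · exact hPH v h
        · exact hRH v h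
      · intro i
        fin_cases i
        · exact ⟨a0, (hZsup a0).mpr (Or.inl P.start_mem_support), hA0⟩
        · exact ⟨a1, (hZsup a1).mpr (Or.inl P.end_mem_support), hA1⟩
        · exact ⟨b2, (hZsup b2).mpr (Or.inr R.start_mem_support), hB2⟩
    have hce0 : (∃ r ∈ W.support, G.Adj (x 0) r) → c = a0 := by
      rintro ⟨r, hrW, hr0⟩
      have hZ2sup : ∀ v, v ∈ (R.append (P.dropUntil c hcP)).support ↔
          (v ∈ R.support ∨ v ∈ (P.dropUntil c hcP).support) := fun v =>
        SimpleGraph.Walk.mem_support_append_iff _ _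
      have hZ2 := hmin' (R.append (P.dropUntil c hcP)) ?_ ?_
      · have ha0m : a0 ∈ (R.append (P.dropUntil c hcP)).support := (hZ2 a0).mpr ha0H
        rcases (hZ2sup a0).mp ha0m with h | h
        · exact (hRuP a0 h P.start_mem_support).symm
        · exact (junction hPpath hcP a0 (P.takeUntil c hcP).start_mem_support h).symm
      · intro v hv
        rcases (hZ2sup v).mp hv with h | h
        · exact hRH v h
        · exact hPH v (SimpleGraph.Walk.support_dropUntil_subset P hcP h)
      · intro i
        fin_cases i
        · exact ⟨r, (hZ2sup r).mpr (Or.inl (hWsubR r hrW)), hr0⟩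
        · exact ⟨a1, (hZ2sup a1).mpr (Or.inr (P.dropUntil c hcP).end_mem_support), hA1⟩
        · exact ⟨b2, (hZ2sup b2).mpr (Or.inl R.start_mem_support), hB2⟩
    have hce1 : (∃ r ∈ W.support, G.Adj (x 1) r) → c = a1 := by
      rintro ⟨r, hrW, hr1⟩
      have hZ3sup : ∀ v, v ∈ (R.append (P.takeUntil c hcP).reverse).support ↔
          (v ∈ R.support ∨ v ∈ (P.takeUntil c hcP).support) := by
        intro v
        rw [SimpleGraph.Walk.mem_support_append_iff, SimpleGraph.Walk.support_reverse,
          List.mem_reverse]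
      have hZ3 := hmin' (R.append (P.takeUntil c hcP).reverse) ?_ ?_
      · have ha1m : a1 ∈ (R.append (P.takeUntil c hcP).reverse).support := (hZ3 a1).mpr ha1H
        rcases (hZ3sup a1).mp ha1m with h | h
        · exact (hRuP a1 h P.end_mem_support).symm
        · exact (junction hPpath hcP a1 h (P.dropUntil c hcP).end_mem_support).symm
      · intro v hv
        rcases (hZ3sup v).mp hv with h | h
        · exact hRH v h
        · exact hPH v (SimpleGraph.Walk.support_takeUntil_subset P hcP h)
      · intro i
        fin_cases i
        · exact ⟨a0, (hZ3sup a0).mpr (Or.inr (P.takeUntil c hcP).start_mem_support), hA0⟩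
        · exact ⟨r, (hZ3sup r).mpr (Or.inl (hWsubR r hrW)), hr1⟩
        · exact ⟨b2, (hZ3sup b2).mpr (Or.inl R.start_mem_support), hB2⟩
    by_cases he0 : ∃ r ∈ W.support, G.Adj (x 0) r
    · by_cases he1 : ∃ r ∈ W.support, G.Adj (x 1) r
      · -- Case IV : impossible
        exfalso
        obtain ⟨r0, hr0W, hr0adj⟩ := he0
        obtain ⟨r1, hr1W, hr1adj⟩ := he1
        have hr0R : r0 ∈ R.support := hWsubR r0 hr0W
        have hr1R : r1 ∈ R.support := hWsubR r1 hr1W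
        have key : ∀ (u v : V) (hu : u ∈ R.support) (hv : v ∈ R.support),
            u ∈ W.support →
            ((G.Adj (x 0) u ∧ G.Adj (x 1) v) ∨ (G.Adj (x 1) u ∧ G.Adj (x 0) v)) →
            v ∈ (R.takeUntil u hu).support → False := by
          intro u v hu hv huW hu0v1 hvt
          have hS := hmin' (R.takeUntil u hu) ?_ ?_
          · have hcm : c ∈ (R.takeUntil u hu).support := (hS c).mpr hcH
            have hcd : c ∈ (R.dropUntil u hu).support := (R.dropUntil u hu).end_mem_support
            have := junction hRpath hu c hcm hcd
            exact hcW (this ▸ huW)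
          · intro z hz
            exact hRH z (SimpleGraph.Walk.support_takeUntil_subset R hu hz)
          · intro i
            fin_cases i
            · rcases hu0v1 with ⟨h1, h2⟩ | ⟨h1, h2⟩
              · exact ⟨u, (R.takeUntil u hu).end_mem_support, h1⟩
              · exact ⟨v, hvt, h2⟩
            · rcases hu0v1 with ⟨h1, h2⟩ | ⟨h1, h2⟩
              · exact ⟨v, hvt, h2⟩
              · exact ⟨u, (R.takeUntil u hu).end_mem_support, h1⟩
            · exact ⟨b2, (R.takeUntil u hu).start_mem_support, hB2⟩
        rcases mem_takeUntil_or R hr0R hr1R with h | h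
        · exact key r0 r1 hr0R hr1R hr0W (Or.inl ⟨hr0adj, hr1adj⟩) h
        · exact key r1 r0 hr1R hr0R hr1W (Or.inr ⟨hr1adj, hr0adj⟩) h
      · -- Case II : outcome (i) with (2,1,0)
        push_neg at he1
        obtain ⟨r0, hr0W, hr0adj⟩ := he0
        have hca0 : c = a0 := hce0 ⟨r0, hr0W, hr0adj⟩
        subst hca0
        have hX : ∀ z ∈ P.support, G.Adj c' z → z = c := by
          intro z hz hadjz
          by_contra hzc
          have hYsup : ∀ v, v ∈ ((P.dropUntil z hz).reverse.append
              (SimpleGraph.Walk.cons hadjz.symm W)).support ↔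
              (v ∈ (P.dropUntil z hz).support ∨ v ∈ W.support) := by
            intro v
            rw [SimpleGraph.Walk.mem_support_append_iff, SimpleGraph.Walk.support_reverse,
              List.mem_reverse, SimpleGraph.Walk.support_cons, List.mem_cons]
            constructor
            · rintro (h | h | h)
              · exact Or.inl h
              · exact Or.inl (h.symm ▸ (P.dropUntil z hz).start_mem_support)
              · exact Or.inr h
            · rintro (h | h)
              · exact Or.inl h
              · exact Or.inr (Or.inr h)
          have hY := hmin' ((P.dropUntil z hz).reverse.append
            (SimpleGraph.Walk.cons hadjz.symm W)) ?_ ?_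
          · have hcY := (hY c).mpr hcH
            rcases (hYsup c).mp hcY with h | h
            · exact hzc (junction hPpath hz c (P.takeUntil z hz).start_mem_support h).symm
            · exact hcW h
          · intro v hv
            rcases (hYsup v).mp hv with h | h
            · exact hPH v (SimpleGraph.Walk.support_dropUntil_subset P hz h)
            · exact hWH v h
          · intro i
            fin_cases i
            · exact ⟨r0, (hYsup r0).mpr (Or.inr hr0W), hr0adj⟩
            · exact ⟨a1, (hYsup a1).mpr (Or.inl (P.dropUntil z hz).end_mem_support), hA1⟩
            · exact ⟨b2, (hYsup b2).mpr (Or.inr W.end_mem_support), hB2⟩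
        set F := W.reverse.append (SimpleGraph.Walk.cons hcc'.symm P) with hF
        have hFsup : ∀ v, v ∈ F.support ↔ (v ∈ W.support ∨ v ∈ P.support) := by
          intro v
          rw [hF, SimpleGraph.Walk.mem_support_append_iff, SimpleGraph.Walk.support_reverse,
            List.mem_reverse, SimpleGraph.Walk.support_cons, List.mem_cons]
          constructor
          · rintro (h | h | h)
            · exact Or.inl h
            · exact Or.inl (h.symm ▸ hc'W)
            · exact Or.inr h
          · rintro (h | h)
            · exact Or.inl h
            · exact Or.inr (Or.inr h)
        have hFpath : F.IsPath := by
          apply isPath_append hWpath.reverse ?_ ?_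
          · rw [SimpleGraph.Walk.cons_isPath_iff]
            exact ⟨hPpath, hc'P⟩
          · intro v hv hv2
            rw [SimpleGraph.Walk.support_reverse, List.mem_reverse] at hv
            rw [SimpleGraph.Walk.support_cons, List.mem_cons] at hv2
            rcases hv2 with h | h
            · exact h
            · exact absurd h (hWdisjP v hv)
        have hFedges : ∀ e, (e ∈ W.edges ∨ e = s(c', c) ∨ e ∈ P.edges) → e ∈ F.edges := by
          intro e he
          rw [hF, SimpleGraph.Walk.edges_append, List.mem_append, SimpleGraph.Walk.edges_cons,
            List.mem_cons]
          rcases he with h | h | h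
          · left; rw [SimpleGraph.Walk.edges_reverse, List.mem_reverse]; exact h
          · exact Or.inr (Or.inl h)
          · exact Or.inr (Or.inr h)
        have hRedge : ∀ e ∈ R.edges, e ∈ F.edges := by
          intro e he
          have hmem : e ∈ (SimpleGraph.Walk.cons hcc' W).edges := by
            rw [← hWdef, SimpleGraph.Walk.edges_reverse, List.mem_reverse]; exact he
          rw [SimpleGraph.Walk.edges_cons, List.mem_cons] at hmem
          rcases hmem with h | h
          · exact hFedges _ (Or.inr (Or.inl (h.trans Sym2.eq_swap)))
          · exact hFedges _ (Or.inl h)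
        have hFind : ∀ u v, u ∈ F.support → v ∈ F.support → G.Adj u v → s(u, v) ∈ F.edges := by
          intro u v hu hv hadj
          rw [hFsup] at hu hv
          rcases hu with hu | hu <;> rcases hv with hv | hv
          · exact hRedge _ (hRind u v (hWsubR u hu) (hWsubR v hv) hadj)
          · have hu' := hpen u hu v hv hadj
            subst hu'
            have hv' := hX v hv hadj
            subst hv'
            exact hFedges _ (Or.inr (Or.inl rfl))
          · have hv' := hpen v hv u hu hadj.symm
            subst hv'
            have hu' := hX u hu hadj.symm
            subst hu'
            exact hFedges _ (Or.inr (Or.inl Sym2.eq_swap))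
          · exact hFedges _ (Or.inr (Or.inr (hPind u v hu hv hadj)))
        refine Or.inl (build1 G x hx H hdisj 2 1 0 (by decide) (by decide) (by decide) F hFpath
          hFind ?_ hB2 hA1 ?_ ?_ ?_)
        · ext z
          simp only [Set.mem_setOf_eq]
          rw [hFsup z, hHPR z]
          constructor
          · rintro (h | h)
            · exact Or.inr ((hmemR z).mpr (Or.inr h))
            · exact Or.inl h
          · rintro (h | h)
            · exact Or.inr h
            · rcases (hmemR z).mp h with h' | h'
              · exact Or.inr (h' ▸ P.start_mem_support)
              · exact Or.inl h'
        · intro z hz hadjz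
          rcases (hHPR z).mp hz with h | h
          · exact absurd hadjz (hA z h)
          · exact hRu2 z h hadjz
        · intro z hz hadjz
          rcases (hHPR z).mp hz with h | h
          · exact hPu1 z h hadjz
          · rcases (hmemR z).mp h with h' | h'
            · exact hPu1 z (h' ▸ P.start_mem_support) hadjz
            · exact absurd hadjz (he1 z h')
        · exact ⟨c, r0, hcH, hWH r0 hr0W, fun h => hcW (h ▸ hr0W), hA0, hr0adj⟩

    · push_neg at he0
      by_cases he1 : ∃ r ∈ W.support, G.Adj (x 1) r
      · -- Case III : outcome (i) with (2,0,1)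
        obtain ⟨r1, hr1W, hr1adj⟩ := he1
        have hca1 : c = a1 := hce1 ⟨r1, hr1W, hr1adj⟩
        subst hca1
        have hX : ∀ z ∈ P.support, G.Adj c' z → z = c := by
          intro z hz hadjz
          by_contra hzc
          have hYsup : ∀ v, v ∈ ((P.takeUntil z hz).append
              (SimpleGraph.Walk.cons hadjz.symm W)).support ↔
              (v ∈ (P.takeUntil z hz).support ∨ v ∈ W.support) := by
            intro v
            rw [SimpleGraph.Walk.mem_support_append_iff,
              SimpleGraph.Walk.support_cons, List.mem_cons]
            constructor
            · rintro (h | h | h)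
              · exact Or.inl h
              · exact Or.inl (h.symm ▸ (P.takeUntil z hz).end_mem_support)
              · exact Or.inr h
            · rintro (h | h)
              · exact Or.inl h
              · exact Or.inr (Or.inr h)
          have hY := hmin' ((P.takeUntil z hz).append
            (SimpleGraph.Walk.cons hadjz.symm W)) ?_ ?_
          · have hcY := (hY c).mpr hcH
            rcases (hYsup c).mp hcY with h | h
            · exact hzc (junction hPpath hz c h (P.dropUntil z hz).end_mem_support).symm
            · exact hcW h
          · intro v hv
            rcases (hYsup v).mp hv with h | h
            · exact hPH v (SimpleGraph.Walk.support_takeUntil_subset P hz h)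
            · exact hWH v h
          · intro i
            fin_cases i
            · exact ⟨a0, (hYsup a0).mpr (Or.inl (P.takeUntil z hz).start_mem_support), hA0⟩
            · exact ⟨r1, (hYsup r1).mpr (Or.inr hr1W), hr1adj⟩
            · exact ⟨b2, (hYsup b2).mpr (Or.inr W.end_mem_support), hB2⟩
        set F := W.reverse.append (SimpleGraph.Walk.cons hcc'.symm P.reverse) with hF
        have hFsup : ∀ v, v ∈ F.support ↔ (v ∈ W.support ∨ v ∈ P.support) := by
          intro v
          rw [hF, SimpleGraph.Walk.mem_support_append_iff, SimpleGraph.Walk.support_reverse,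
            List.mem_reverse, SimpleGraph.Walk.support_cons, List.mem_cons,
            SimpleGraph.Walk.support_reverse, List.mem_reverse]
          constructor
          · rintro (h | h | h)
            · exact Or.inl h
            · exact Or.inl (h.symm ▸ hc'W)
            · exact Or.inr h
          · rintro (h | h)
            · exact Or.inl h
            · exact Or.inr (Or.inr h)
        have hFpath : F.IsPath := by
          apply isPath_append hWpath.reverse ?_ ?_
          · rw [SimpleGraph.Walk.cons_isPath_iff]
            refine ⟨hPpath.reverse, fun h => hc'P ?_⟩
            rwa [SimpleGraph.Walk.support_reverse, List.mem_reverse] at h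
          · intro v hv hv2
            rw [SimpleGraph.Walk.support_reverse, List.mem_reverse] at hv
            rw [SimpleGraph.Walk.support_cons, List.mem_cons,
              SimpleGraph.Walk.support_reverse, List.mem_reverse] at hv2
            rcases hv2 with h | h
            · exact h
            · exact absurd h (hWdisjP v hv)
        have hFedges : ∀ e, (e ∈ W.edges ∨ e = s(c', c) ∨ e ∈ P.edges) → e ∈ F.edges := by
          intro e he
          rw [hF, SimpleGraph.Walk.edges_append, List.mem_append, SimpleGraph.Walk.edges_cons,
            List.mem_cons]
          rcases he with h | h | h
          · left; rw [SimpleGraph.Walk.edges_reverse, List.mem_reverse]; exact h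
          · exact Or.inr (Or.inl h)
          · refine Or.inr (Or.inr ?_)
            rw [SimpleGraph.Walk.edges_reverse, List.mem_reverse]; exact h
        have hRedge : ∀ e ∈ R.edges, e ∈ F.edges := by
          intro e he
          have hmem : e ∈ (SimpleGraph.Walk.cons hcc' W).edges := by
            rw [← hWdef, SimpleGraph.Walk.edges_reverse, List.mem_reverse]; exact he
          rw [SimpleGraph.Walk.edges_cons, List.mem_cons] at hmem
          rcases hmem with h | h
          · exact hFedges _ (Or.inr (Or.inl (h.trans Sym2.eq_swap)))
          · exact hFedges _ (Or.inl h)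
        have hFind : ∀ u v, u ∈ F.support → v ∈ F.support → G.Adj u v → s(u, v) ∈ F.edges := by
          intro u v hu hv hadj
          rw [hFsup] at hu hv
          rcases hu with hu | hu <;> rcases hv with hv | hv
          · exact hRedge _ (hRind u v (hWsubR u hu) (hWsubR v hv) hadj)
          · have hu' := hpen u hu v hv hadj
            subst hu'
            have hv' := hX v hv hadj
            subst hv'
            exact hFedges _ (Or.inr (Or.inl rfl))
          · have hv' := hpen v hv u hu hadj.symm
            subst hv'
            have hu' := hX u hu hadj.symm
            subst hu'
            exact hFedges _ (Or.inr (Or.inl Sym2.eq_swap))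
          · exact hFedges _ (Or.inr (Or.inr (hPind u v hu hv hadj)))
        refine Or.inl (build1 G x hx H hdisj 2 0 1 (by decide) (by decide) (by decide) F hFpath
          hFind ?_ hB2 hA0 ?_ ?_ ?_)
        · ext z
          simp only [Set.mem_setOf_eq]
          rw [hFsup z, hHPR z]
          constructor
          · rintro (h | h)
            · exact Or.inr ((hmemR z).mpr (Or.inr h))
            · exact Or.inl h
          · rintro (h | h)
            · exact Or.inr h
            · rcases (hmemR z).mp h with h' | h'
              · exact Or.inr (h' ▸ P.end_mem_support)
              · exact Or.inl h'
        · intro z hz hadjz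
          rcases (hHPR z).mp hz with h | h
          · exact absurd hadjz (hA z h)
          · exact hRu2 z h hadjz
        · intro z hz hadjz
          rcases (hHPR z).mp hz with h | h
          · exact hPu0 z h hadjz
          · rcases (hmemR z).mp h with h' | h'
            · exact hPu0 z (h' ▸ P.end_mem_support) hadjz
            · exact absurd hadjz (he0 z h')
        · exact ⟨c, r1, hcH, hWH r1 hr1W, fun h => hcW (h ▸ hr1W), hA1, hr1adj⟩

      · -- Case I
        push_neg at he1
        obtain ⟨f, hfP, hfX, hfirst⟩ := firstHit P {z | z ∈ P.support ∧ G.Adj c' z}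
          hcP ⟨hcP, hcc'.symm⟩
        have hfc' : G.Adj c' f := hfX.2
        by_cases hz0 : ∃ z ∈ P.support, G.Adj c' z ∧ z ≠ f
        · -- triangle case : outcome (iii)
          obtain ⟨z0, hz0P, hz0adj, hz0f⟩ := hz0
          set TK := P.takeUntil f hfP with hTKdef
          set D := P.dropUntil f hfP with hDdef0
          have hjunf : ∀ v, v ∈ TK.support → v ∈ D.support → v = f := junction hPpath hfP
          have hsplitf : ∀ v, v ∈ P.support ↔ v ∈ TK.support ∨ v ∈ D.support :=
            mem_support_split P hfP
          have hz0D : z0 ∈ D.support :=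
            ((hsplitf z0).mp hz0P).resolve_left (fun h => absurd (hfirst z0 h ⟨hz0P, hz0adj⟩) hz0f)
          have hDnotnil : ¬ D.Nil := by
            intro hnil
            have hsup := SimpleGraph.Walk.nil_iff_support_eq.mp hnil
            rw [hsup, List.mem_singleton] at hz0D
            exact hz0f hz0D
          obtain ⟨g, hfg, D', hDdef⟩ := SimpleGraph.Walk.not_nil_iff.mp hDnotnil
          have hDpath : D.IsPath := hPpath.dropUntil hfP
          have hconsD : (SimpleGraph.Walk.cons hfg D').IsPath := hDdef ▸ hDpath
          have hD'path : D'.IsPath := hconsD.of_cons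
          have hfD' : f ∉ D'.support := ((SimpleGraph.Walk.cons_isPath_iff _ _).mp hconsD).2
          have hDmem : ∀ v, v ∈ D.support ↔ (v = f ∨ v ∈ D'.support) := by
            intro v
            rw [hDdef, SimpleGraph.Walk.support_cons, List.mem_cons]
          have hD'subP : ∀ v ∈ D'.support, v ∈ P.support := fun v hv =>
            SimpleGraph.Walk.support_dropUntil_subset P hfP ((hDmem v).mpr (Or.inr hv))
          have hTKsub : ∀ v ∈ TK.support, v ∈ P.support :=
            fun v hv => SimpleGraph.Walk.support_takeUntil_subset P hfP hv
          have hgD' : g ∈ D'.support := D'.start_mem_support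
          have hgP : g ∈ P.support := hD'subP g hgD'
          have hgH : g ∈ H := hPH g hgP
          have hfH : f ∈ H := hPH f hfP
          have hTKD' : ∀ v, v ∈ TK.support → v ∈ D'.support → False := fun v h1 h2 =>
            hfD' ((hjunf v h1 ((hDmem v).mpr (Or.inr h2))) ▸ h2)
          have hQ0mem : ∀ v, v ∈ TK.reverse.support ↔ v ∈ TK.support := by
            intro v
            rw [SimpleGraph.Walk.support_reverse, List.mem_reverse]
          have hXfg : ∀ z ∈ P.support, G.Adj c' z → z = f ∨ z = g := by
            intro z hzP hadjz
            by_contra hboth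
            push_neg at hboth
            obtain ⟨hzf, hzg⟩ := hboth
            have hzD : z ∈ D.support :=
              ((hsplitf z).mp hzP).resolve_left (fun h => hzf (hfirst z h ⟨hzP, hadjz⟩))
            have hzD' : z ∈ D'.support := ((hDmem z).mp hzD).resolve_left hzf
            have hjunD' : ∀ v, v ∈ (D'.takeUntil z hzD').support →
                v ∈ (D'.dropUntil z hzD').support → v = z := junction hD'path hzD'
            have hEsub : ∀ v ∈ (D'.dropUntil z hzD').support, v ∈ P.support := fun v hv =>
              hD'subP v (SimpleGraph.Walk.support_dropUntil_subset D' hzD' hv)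
            have hSWsup : ∀ v, v ∈ (TK.append (SimpleGraph.Walk.cons hfc'.symm
                (W.append (W.reverse.append (SimpleGraph.Walk.cons hadjz
                  (D'.dropUntil z hzD')))))).support ↔
                (v ∈ TK.support ∨ v ∈ W.support ∨ v ∈ (D'.dropUntil z hzD').support) := by
              intro v
              rw [SimpleGraph.Walk.mem_support_append_iff, SimpleGraph.Walk.support_cons,
                List.mem_cons, SimpleGraph.Walk.mem_support_append_iff,
                SimpleGraph.Walk.mem_support_append_iff, SimpleGraph.Walk.support_reverse,
                List.mem_reverse, SimpleGraph.Walk.support_cons, List.mem_cons]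
              constructor
              · rintro (h | h | h | h | h | h)
                · exact Or.inl h
                · exact Or.inl (h.symm ▸ TK.end_mem_support)
                · exact Or.inr (Or.inl h)
                · exact Or.inr (Or.inl h)
                · exact Or.inr (Or.inl (h.symm ▸ hc'W))
                · exact Or.inr (Or.inr h)
              · rintro (h | h | h)
                · exact Or.inl h
                · exact Or.inr (Or.inr (Or.inl h))
                · exact Or.inr (Or.inr (Or.inr (Or.inr (Or.inr h))))
            have hSW := hmin' (TK.append (SimpleGraph.Walk.cons hfc'.symm
              (W.append (W.reverse.append (SimpleGraph.Walk.cons hadjz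
                (D'.dropUntil z hzD')))))) ?_ ?_
            · have hgm := (hSW g).mpr hgH
              rcases (hSWsup g).mp hgm with h | h | h
              · exact hTKD' g h hgD'
              · exact hWdisjP g h hgP
              · exact hzg (hjunD' g (D'.takeUntil z hzD').start_mem_support h).symm
            · intro v hv
              rcases (hSWsup v).mp hv with h | h | h
              · exact hPH v (hTKsub v h)
              · exact hWH v h
              · exact hPH v (hEsub v h)
            · intro i
              fin_cases i
              · exact ⟨a0, (hSWsup a0).mpr (Or.inl TK.start_mem_support), hA0⟩
              · exact ⟨a1, (hSWsup a1).mpr (Or.inr (Or.inr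
                  (D'.dropUntil z hzD').end_mem_support)), hA1⟩
              · exact ⟨b2, (hSWsup b2).mpr (Or.inr (Or.inl W.end_mem_support)), hB2⟩
          have hz0g : z0 = g := (hXfg z0 hz0P hz0adj).resolve_left hz0f
          have hc'g : G.Adj c' g := hz0g ▸ hz0adj
          refine Or.inr (Or.inr (build3 G x hx H hdisj (pick3 f g c') ?_ ?_ (pick3 a0 a1 b2)
            (pick3 (α := fun i => G.Walk (pick3 (α := fun _ => V) f g c' i)
                ((pick3 (α := fun _ => V) a0 a1 b2) i))
              TK.reverse D' W) ?_ ?_ ?_ ?_ ?_ ?_ ?_))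
          · intro i
            fin_cases i
            · exact hfH
            · exact hgH
            · exact hc'H
          · intro i j hij
            fin_cases i <;> fin_cases j <;> simp only [pick3_zero, pick3_one, pick3_two]
            · exact absurd rfl hij
            · exact hfg
            · exact hfc'.symm
            · exact hfg.symm
            · exact absurd rfl hij
            · exact hc'g.symm
            · exact hfc'
            · exact hc'g
            · exact absurd rfl hij
          · intro i
            fin_cases i
            · exact (hPpath.takeUntil hfP).reverse
            · exact hD'path
            · exact hWpath
          · intro i
            fin_cases i
            · intro v hv
              exact hPH v (hTKsub v ((hQ0mem v).mp hv))
            · intro v hv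
              exact hPH v (hD'subP v hv)
            · intro v hv
              exact hWH v hv
          · intro v hv
            rcases (hHPR v).mp hv with h | h
            · rcases (hsplitf v).mp h with h' | h'
              · exact ⟨0, (hQ0mem v).mpr h'⟩
              · rcases (hDmem v).mp h' with h'' | h''
                · exact ⟨0, (hQ0mem v).mpr (h'' ▸ TK.end_mem_support)⟩
                · exact ⟨1, h''⟩
            · rcases (hmemR v).mp h with h' | h'
              · rcases hXfg c hcP hcc'.symm with h'' | h''
                · exact ⟨0, (hQ0mem v).mpr ((h'.trans h'') ▸ TK.end_mem_support)⟩
                · exact ⟨1, (h'.trans h'') ▸ hgD'⟩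
              · exact ⟨2, h'⟩
          · intro i j hij
            fin_cases i <;> fin_cases j <;> simp only [pick3_zero, pick3_one, pick3_two]
            · exact absurd rfl hij
            · intro v hv1 hv2
              exact hTKD' v ((hQ0mem v).mp hv1) hv2
            · intro v hv1 hv2
              exact hWdisjP v hv2 (hTKsub v ((hQ0mem v).mp hv1))
            · intro v hv1 hv2
              exact hTKD' v ((hQ0mem v).mp hv2) hv1
            · exact absurd rfl hij
            · intro v hv1 hv2
              exact hWdisjP v hv2 (hD'subP v hv1)
            · intro v hv1 hv2
              exact hWdisjP v hv1 (hTKsub v ((hQ0mem v).mp hv2))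
            · intro v hv1 hv2
              exact hWdisjP v hv1 (hD'subP v hv2)
            · exact absurd rfl hij
          · intro i j hij
            fin_cases i <;> fin_cases j <;> simp only [pick3_zero, pick3_one, pick3_two]
            · exact absurd rfl hij
            · -- TK vs D'
              intro u v hu hv hadj
              have he := hPind u v (hTKsub u ((hQ0mem u).mp hu)) (hD'subP v hv) hadj
              rcases (mem_edges_split P hfP _).mp he with h | h
              · exact absurd hv (fun h2 => hTKD' v
                  (SimpleGraph.Walk.snd_mem_support_of_mem_edges _ h) h2)
              · rw [← hDdef0, hDdef, SimpleGraph.Walk.edges_cons, List.mem_cons] at h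
                rcases h with h | h
                · rw [Sym2.eq_iff] at h
                  rcases h with ⟨h1, h2⟩ | ⟨h1, h2⟩
                  · exact ⟨h1, h2⟩
                  · exact absurd (h2 ▸ hv) hfD'
                · exact absurd ((hQ0mem u).mp hu) (fun h2 => hTKD' u h2
                    (SimpleGraph.Walk.fst_mem_support_of_mem_edges _ h))
            · -- TK vs W
              intro u v hu hv hadj
              have hvc' := hpen v hv u (hTKsub u ((hQ0mem u).mp hu)) hadj.symm
              subst hvc'
              rcases hXfg u (hTKsub u ((hQ0mem u).mp hu)) hadj.symm with h | h
              · exact ⟨h, rfl⟩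
              · exact absurd ((hQ0mem u).mp hu) (fun h2 => hTKD' u h2 (h ▸ hgD'))
            · -- D' vs TK
              intro u v hu hv hadj
              have he := hPind u v (hD'subP u hu) (hTKsub v ((hQ0mem v).mp hv)) hadj
              rcases (mem_edges_split P hfP _).mp he with h | h
              · exact absurd hu (fun h2 => hTKD' u
                  (SimpleGraph.Walk.fst_mem_support_of_mem_edges _ h) h2)
              · rw [← hDdef0, hDdef, SimpleGraph.Walk.edges_cons, List.mem_cons] at h
                rcases h with h | h
                · rw [Sym2.eq_iff] at h
                  rcases h with ⟨h1, h2⟩ | ⟨h1, h2⟩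
                  · exact absurd (h1 ▸ hu) hfD'
                  · exact ⟨h1, h2⟩
                · exact absurd ((hQ0mem v).mp hv) (fun h2 => hTKD' v h2
                    (SimpleGraph.Walk.snd_mem_support_of_mem_edges _ h))
            · exact absurd rfl hij
            · -- D' vs W
              intro u v hu hv hadj
              have hvc' := hpen v hv u (hD'subP u hu) hadj.symm
              subst hvc'
              rcases hXfg u (hD'subP u hu) hadj.symm with h | h
              · exact absurd (h ▸ hu) hfD'
              · exact ⟨h, rfl⟩
            · -- W vs TK
              intro u v hu hv hadj
              have huc' := hpen u hu v (hTKsub v ((hQ0mem v).mp hv)) hadj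
              subst huc'
              rcases hXfg v (hTKsub v ((hQ0mem v).mp hv)) hadj with h | h
              · exact ⟨rfl, h⟩
              · exact absurd ((hQ0mem v).mp hv) (fun h2 => hTKD' v h2 (h ▸ hgD'))
            · -- W vs D'
              intro u v hu hv hadj
              have huc' := hpen u hu v (hD'subP v hv) hadj
              subst huc'
              rcases hXfg v (hD'subP v hv) hadj with h | h
              · exact absurd (h ▸ hv) hfD'
              · exact ⟨rfl, h⟩
            · exact absurd rfl hij
          · intro i j hij
            fin_cases i <;> fin_cases j <;> simp only [pick3_zero, pick3_one, pick3_two]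
            · exact absurd rfl hij
            · intro v hv hadj
              have hva0 : v = a0 := hPu0 v (hD'subP v hv) hadj
              exact hTKD' v (hva0 ▸ TK.start_mem_support) hv
            · intro v hv hadj
              exact he0 v hv hadj
            · intro v hv hadj
              have hva1 : v = a1 := hPu1 v (hTKsub v ((hQ0mem v).mp hv)) hadj
              exact hTKD' v ((hQ0mem v).mp hv) (hva1 ▸ D'.end_mem_support)
            · exact absurd rfl hij
            · intro v hv hadj
              exact he1 v hv hadj
            · intro v hv hadj
              exact hA v (hTKsub v ((hQ0mem v).mp hv)) hadj
            · intro v hv hadj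
              exact hA v (hD'subP v hv) hadj
            · exact absurd rfl hij
          · intro i
            fin_cases i
            · exact hA0.symm
            · exact hA1.symm
            · exact hB2.symm

        · -- single attachment : outcome (ii)
          push_neg at hz0
          have hXc : ∀ z ∈ P.support, G.Adj c' z → z = c := by
            have hcf : c = f := hz0 c hcP hcc'.symm
            intro z hzP hadjz
            exact (hz0 z hzP hadjz).trans hcf.symm
          set TK := P.takeUntil c hcP with hTK
          set DR := P.dropUntil c hcP with hDR
          have hjun : ∀ v, v ∈ TK.support → v ∈ DR.support → v = c := junction hPpath hcP
          have hsplitP : ∀ v, v ∈ P.support ↔ v ∈ TK.support ∨ v ∈ DR.support :=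
            mem_support_split P hcP
          have hQ0mem : ∀ v, v ∈ TK.reverse.support ↔ v ∈ TK.support := by
            intro v
            rw [SimpleGraph.Walk.support_reverse, List.mem_reverse]
          have hQ2mem : ∀ v, v ∈ (SimpleGraph.Walk.cons hcc' W).support ↔
              (v = c ∨ v ∈ W.support) := by
            intro v
            rw [SimpleGraph.Walk.support_cons, List.mem_cons]
          have hTKsub : ∀ v ∈ TK.support, v ∈ P.support :=
            fun v hv => SimpleGraph.Walk.support_takeUntil_subset P hcP hv
          have hDRsub : ∀ v ∈ DR.support, v ∈ P.support :=
            fun v hv => SimpleGraph.Walk.support_dropUntil_subset P hcP hv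
          have ha0TK : a0 ∈ TK.support := TK.start_mem_support
          have ha1DR : a1 ∈ DR.support := DR.end_mem_support
          refine Or.inr (Or.inl (build2 G x hx H hdisj c hcH (pick3 a0 a1 b2)
            (pick3 (α := fun i => G.Walk c (pick3 (α := fun _ => V) a0 a1 b2 i))
              TK.reverse DR (SimpleGraph.Walk.cons hcc' W)) ?_ ?_ ?_ ?_ ?_ ?_ ?_))
          · intro i
            fin_cases i
            · exact (hPpath.takeUntil hcP).reverse
            · exact hPpath.dropUntil hcP
            · exact (SimpleGraph.Walk.cons_isPath_iff _ _).mpr ⟨hWpath, hcW⟩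
          · intro i
            fin_cases i
            · intro v hv
              exact hPH v (hTKsub v ((hQ0mem v).mp hv))
            · intro v hv
              exact hPH v (hDRsub v hv)
            · intro v hv
              rcases (hQ2mem v).mp hv with h | h
              · exact h ▸ hcH
              · exact hWH v h
          · intro v hv
            rcases (hHPR v).mp hv with h | h
            · rcases (hsplitP v).mp h with h' | h'
              · exact ⟨0, (hQ0mem v).mpr h'⟩
              · exact ⟨1, h'⟩
            · rcases (hmemR v).mp h with h' | h'
              · exact ⟨2, (hQ2mem v).mpr (Or.inl h')⟩
              · exact ⟨2, (hQ2mem v).mpr (Or.inr h')⟩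
          · intro i j hij
            fin_cases i <;> fin_cases j <;> simp only [pick3_zero, pick3_one, pick3_two]
            · exact absurd rfl hij
            · intro v hv1 hv2
              exact hjun v ((hQ0mem v).mp hv1) hv2
            · intro v hv1 hv2
              rcases (hQ2mem v).mp hv2 with h | h
              · exact h
              · exact absurd (hTKsub v ((hQ0mem v).mp hv1)) (hWdisjP v h)
            · intro v hv1 hv2
              exact hjun v ((hQ0mem v).mp hv2) hv1
            · exact absurd rfl hij
            · intro v hv1 hv2
              rcases (hQ2mem v).mp hv2 with h | h
              · exact h
              · exact absurd (hDRsub v hv1) (hWdisjP v h)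
            · intro v hv1 hv2
              rcases (hQ2mem v).mp hv1 with h | h
              · exact h
              · exact absurd (hTKsub v ((hQ0mem v).mp hv2)) (hWdisjP v h)
            · intro v hv1 hv2
              rcases (hQ2mem v).mp hv1 with h | h
              · exact h
              · exact absurd (hDRsub v hv2) (hWdisjP v h)
            · exact absurd rfl hij
          · intro i j hij
            fin_cases i <;> fin_cases j <;> simp only [pick3_zero, pick3_one, pick3_two]
            · exact absurd rfl hij
            · intro u v hu hv hut hvt hadj
              have he := hPind u v (hTKsub u ((hQ0mem u).mp hu)) (hDRsub v hv) hadj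
              rcases (mem_edges_split P hcP _).mp he with h | h
              · exact hvt (hjun v (SimpleGraph.Walk.snd_mem_support_of_mem_edges _ h) hv)
              · exact hut (hjun u ((hQ0mem u).mp hu)
                  (SimpleGraph.Walk.fst_mem_support_of_mem_edges _ h))
            · intro u v hu hv hut hvt hadj
              have hvW : v ∈ W.support := ((hQ2mem v).mp hv).resolve_left hvt
              have := hpen v hvW u (hTKsub u ((hQ0mem u).mp hu)) hadj.symm
              subst this
              exact hut (hXc u (hTKsub u ((hQ0mem u).mp hu)) hadj.symm)
            · intro u v hu hv hut hvt hadj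
              have he := hPind u v (hDRsub u hu) (hTKsub v ((hQ0mem v).mp hv)) hadj
              rcases (mem_edges_split P hcP _).mp he with h | h
              · exact hut (hjun u (SimpleGraph.Walk.fst_mem_support_of_mem_edges _ h) hu)
              · exact hvt (hjun v ((hQ0mem v).mp hv)
                  (SimpleGraph.Walk.snd_mem_support_of_mem_edges _ h))
            · exact absurd rfl hij
            · intro u v hu hv hut hvt hadj
              have hvW : v ∈ W.support := ((hQ2mem v).mp hv).resolve_left hvt
              have := hpen v hvW u (hDRsub u hu) hadj.symm
              subst this
              exact hut (hXc u (hDRsub u hu) hadj.symm)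
            · intro u v hu hv hut hvt hadj
              have huW : u ∈ W.support := ((hQ2mem u).mp hu).resolve_left hut
              have := hpen u huW v (hTKsub v ((hQ0mem v).mp hv)) hadj
              subst this
              exact hvt (hXc v (hTKsub v ((hQ0mem v).mp hv)) hadj)
            · intro u v hu hv hut hvt hadj
              have huW : u ∈ W.support := ((hQ2mem u).mp hu).resolve_left hut
              have := hpen u huW v (hDRsub v hv) hadj
              subst this
              exact hvt (hXc v (hDRsub v hv) hadj)
            · exact absurd rfl hij
          · intro i j hij
            fin_cases i <;> fin_cases j <;> simp only [pick3_zero, pick3_one, pick3_two]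
            · exact absurd rfl hij
            · intro v hv hvt hadj
              have hva0 : v = a0 := hPu0 v (hDRsub v hv) hadj
              subst hva0
              exact hvt (hjun v ha0TK hv)
            · intro v hv hvt hadj
              rcases (hQ2mem v).mp hv with h | h
              · exact hvt h
              · exact he0 v h hadj
            · intro v hv hvt hadj
              have hva1 : v = a1 := hPu1 v (hTKsub v ((hQ0mem v).mp hv)) hadj
              subst hva1
              exact hvt (hjun v ((hQ0mem v).mp hv) ha1DR)
            · exact absurd rfl hij
            · intro v hv hvt hadj
              rcases (hQ2mem v).mp hv with h | h
              · exact hvt h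
              · exact he1 v h hadj
            · intro v hv hvt hadj
              exact hA v (hTKsub v ((hQ0mem v).mp hv)) hadj
            · intro v hv hvt hadj
              exact hA v (hDRsub v hv) hadj
            · exact absurd rfl hij
          · intro i
            fin_cases i
            · exact hA0.symm
            · exact hA1.symm
            · exact hB2.symm


end Paper
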